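/- arXiv:0801.1698 — 3 statements merged into one kernel-verified Lean document; each statement's English description precedes it below -/
import Mathlib

section
/- (Variant of de Finetti's Theorem.) Let K be a standard Borel space, S a countably infinite set partitioned into infinite subsets S₁ and S₂, and μ an exchangeable probability measure on K^S. Then the coordinate random variables π_s for s ∈ S₁ are conditionally independent given the σ-algebra generated by (π_s)_{s∈S₂}, and moreover for any bounded measurable f : K → ℝ the conditional expectations E_μ[f ∘ π_s | σ(π_{S₂})] agree almost surely for all s ∈ S₁. -/
open MeasureTheory

open Filter
open MeasureTheory Filter

namespace DeFinettiAux



variable {Ω : Type*}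

/-- Bounded measurable functions are integrable on a finite measure space. -/
lemma integrable_of_bdd [MeasurableSpace Ω] {μ : Measure Ω} [IsFiniteMeasure μ]
    {h : Ω → ℝ} (hh : AEStronglyMeasurable h μ) {C : ℝ} (hC : ∀ ω, |h ω| ≤ C) :
    Integrable h μ :=
  memLp_one_iff_integrable.mp
    ((memLp_top_of_bound hh C (Filter.Eventually.of_forall hC)).mono_exponent le_top)

/-- π-system uniqueness for set integrals. -/
lemma setIntegral_eq_on_of_generateFrom {m m0 : MeasurableSpace Ω} (hm : m ≤ m0)
    {μ : Measure Ω} [IsFiniteMeasure μ] {P : Set (Set Ω)} (hpi : IsPiSystem P)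
    (hgen : m = MeasurableSpace.generateFrom P) {h₁ h₂ : Ω → ℝ}
    (hi₁ : Integrable h₁ μ) (hi₂ : Integrable h₂ μ)
    (h0 : ∫ x, h₁ x ∂μ = ∫ x, h₂ x ∂μ)
    (hP : ∀ B ∈ P, ∫ x in B, h₁ x ∂μ = ∫ x in B, h₂ x ∂μ) :
    ∀ ⦃B⦄, MeasurableSet[m] B → ∫ x in B, h₁ x ∂μ = ∫ x in B, h₂ x ∂μ := by
  refine MeasurableSpace.induction_on_inter (m := m)
    (C := fun B _ => ∫ x in B, h₁ x ∂μ = ∫ x in B, h₂ x ∂μ) hgen hpi (by simp) hP ?_ ?_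
  · intro t ht heq
    have e1 : ∫ x in t, h₁ x ∂μ + ∫ x in tᶜ, h₁ x ∂μ = ∫ x, h₁ x ∂μ :=
      integral_add_compl (hm _ ht) hi₁
    have e2 : ∫ x in t, h₂ x ∂μ + ∫ x in tᶜ, h₂ x ∂μ = ∫ x, h₂ x ∂μ :=
      integral_add_compl (hm _ ht) hi₂
    linarith
  · intro f hd hf heq
    rw [integral_iUnion (fun i => hm _ (hf i)) hd hi₁.integrableOn,
      integral_iUnion (fun i => hm _ (hf i)) hd hi₂.integrableOn]
    exact tsum_congr heq


local notation "⟪" x ", " y "⟫" => @inner ℝ _ _ x y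

variable {Ω : Type*} [MeasurableSpace Ω] {μ : Measure Ω} [IsProbabilityMeasure μ]

lemma memℒp_avg {X : ℕ → Ω → ℝ} (hX : ∀ j, MemLp (X j) 2 μ) (I : Finset ℕ) :
    MemLp (fun ω => ((I.card : ℝ))⁻¹ * ∑ j ∈ I, X j ω) 2 μ := by
  have : MemLp (fun ω => ∑ j ∈ I, X j ω) 2 μ := by
    classical
    induction I using Finset.induction with
    | empty => simpa using memLp_const (0 : ℝ)
    | insert _ _ hj ih =>
      simp only [Finset.sum_insert hj]
      exact ((hX _).add ih)
  exact this.const_mul _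

noncomputable def avgLp {X : ℕ → Ω → ℝ} (hX : ∀ j, MemLp (X j) 2 μ) (I : Finset ℕ) :
    Lp ℝ 2 μ :=
  (memℒp_avg hX I).toLp _

lemma avgLp_coe {X : ℕ → Ω → ℝ} (hX : ∀ j, MemLp (X j) 2 μ) (I : Finset ℕ) :
    (avgLp hX I : Ω → ℝ) =ᵐ[μ] fun ω => ((I.card : ℝ))⁻¹ * ∑ j ∈ I, X j ω :=
  MemLp.coeFn_toLp _

lemma inner_avgLp {X : ℕ → Ω → ℝ} (hX : ∀ j, MemLp (X j) 2 μ)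
    (hXi : ∀ j k, Integrable (fun ω => X j ω * X k ω) μ)
    {c d : ℝ} (hcov : ∀ j k, j ≠ k → ∫ ω, X j ω * X k ω ∂μ = c)
    (hvar : ∀ j, ∫ ω, X j ω * X j ω ∂μ = d)
    {I J : Finset ℕ} (hI : I.Nonempty) (hJ : J.Nonempty) (hIJ : I ⊆ J) :
    ⟪avgLp hX I, avgLp hX J⟫ = (d - c) / (J.card : ℝ) + c := by
  classical
  have h1 : ⟪avgLp hX I, avgLp hX J⟫ = ∫ ω, (avgLp hX I) ω * (avgLp hX J) ω ∂μ := by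
    rw [L2.inner_def]; simp [RCLike.inner_apply, conj_trivial]; simp only [mul_comm]
  have h2 : (fun ω => (avgLp hX I) ω * (avgLp hX J) ω) =ᵐ[μ]
      fun ω => (((I.card : ℝ))⁻¹ * ∑ j ∈ I, X j ω) * (((J.card : ℝ))⁻¹ * ∑ k ∈ J, X k ω) :=
    (avgLp_coe hX I).mul (avgLp_coe hX J)
  rw [h1, integral_congr_ae h2]
  have hrw : ∀ ω : Ω, (((I.card : ℝ))⁻¹ * ∑ j ∈ I, X j ω) * (((J.card : ℝ))⁻¹ * ∑ k ∈ J, X k ω)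
      = ((I.card : ℝ))⁻¹ * ((J.card : ℝ))⁻¹ * ∑ j ∈ I, ∑ k ∈ J, X j ω * X k ω := by
    intro ω
    rw [show (((I.card : ℝ))⁻¹ * ∑ j ∈ I, X j ω) * (((J.card : ℝ))⁻¹ * ∑ k ∈ J, X k ω)
        = ((I.card : ℝ))⁻¹ * ((J.card : ℝ))⁻¹ * ((∑ j ∈ I, X j ω) * (∑ k ∈ J, X k ω)) by ring,
      Finset.sum_mul_sum]
  simp_rw [hrw]
  rw [integral_const_mul,
    integral_finset_sum _ (fun j _ => integrable_finset_sum _ (fun k _ => hXi j k))]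
  have h3 : ∀ j ∈ I, (∫ ω, ∑ k ∈ J, X j ω * X k ω ∂μ) = d + ((J.card : ℝ) - 1) * c := by
    intro j hj
    rw [integral_finset_sum _ (fun k _ => hXi j k)]
    have : ∀ k ∈ J, (∫ ω, X j ω * X k ω ∂μ) = if j = k then d else c := by
      intro k _
      by_cases h : j = k
      · simp [h, hvar k]
      · simp [h, hcov j k h]
    rw [Finset.sum_congr rfl this]
    have hjJ : j ∈ J := hIJ hj
    have hsplit : ∀ k ∈ J, (if j = k then d else c) = (if j = k then d - c else 0) + c := by
      intro k _; by_cases h : j = k <;> simp [h]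
    rw [Finset.sum_congr rfl hsplit, Finset.sum_add_distrib, Finset.sum_ite_eq, if_pos hjJ,
      Finset.sum_const, nsmul_eq_mul]
    ring
  rw [Finset.sum_congr rfl h3, Finset.sum_const, nsmul_eq_mul]
  have hI0 : (I.card : ℝ) ≠ 0 := Nat.cast_ne_zero.mpr (Finset.card_ne_zero_of_mem hI.choose_spec)
  have hJ0 : (J.card : ℝ) ≠ 0 := Nat.cast_ne_zero.mpr (Finset.card_ne_zero_of_mem hJ.choose_spec)
  field_simp
  ring



variable {Ω : Type*} [MeasurableSpace Ω] {μ : Measure Ω} [IsProbabilityMeasure μ]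

lemma exists_L2_limit {X : ℕ → Ω → ℝ} (hX : ∀ j, MemLp (X j) 2 μ)
    (hXi : ∀ j k, Integrable (fun ω => X j ω * X k ω) μ)
    {c d : ℝ} (hcov : ∀ j k, j ≠ k → ∫ ω, X j ω * X k ω ∂μ = c)
    (hvar : ∀ j, ∫ ω, X j ω * X j ω ∂μ = d) :
    ∃ G : Lp ℝ 2 μ, ∀ I : ℕ → Finset ℕ, (∀ N, (I N).Nonempty) →
      Filter.Tendsto (fun N => (I N).card) Filter.atTop Filter.atTop →
      Filter.Tendsto (fun N => avgLp hX (I N)) Filter.atTop (nhds G) := by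
  classical
  have hsq : ∀ {I J : Finset ℕ}, I.Nonempty → J.Nonempty → I ⊆ J →
      ‖avgLp hX I - avgLp hX J‖ ^ 2 = (d - c) * (1 / (I.card : ℝ) - 1 / (J.card : ℝ)) := by
    intro I J hI hJ hIJ
    rw [@norm_sub_sq_real, ← real_inner_self_eq_norm_sq, ← real_inner_self_eq_norm_sq,
      inner_avgLp hX hXi hcov hvar hI hI subset_rfl,
      inner_avgLp hX hXi hcov hvar hJ hJ subset_rfl,
      inner_avgLp hX hXi hcov hvar hI hJ hIJ]
    field_simp
    ring
  have hdc : 0 ≤ d - c := by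
    have h2 := hsq (I := {0}) (J := {0, 1}) (Finset.singleton_nonempty 0)
      (by simp) (by simp)
    have hc1 : ({0} : Finset ℕ).card = 1 := rfl
    have hc2 : ({0, 1} : Finset ℕ).card = 2 := rfl
    rw [hc1, hc2] at h2
    nlinarith [sq_nonneg ‖avgLp hX {0} - avgLp hX ({0, 1} : Finset ℕ)‖]
  have hdist : ∀ I J : Finset ℕ, I.Nonempty → J.Nonempty →
      dist (avgLp hX I) (avgLp hX J) ≤
        Real.sqrt ((d - c) / (I.card : ℝ)) + Real.sqrt ((d - c) / (J.card : ℝ)) := by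
    intro I J hI hJ
    have hU : (I ∪ J).Nonempty := hI.mono Finset.subset_union_left
    have key : ∀ (I' : Finset ℕ), I'.Nonempty → I' ⊆ I ∪ J →
        dist (avgLp hX I') (avgLp hX (I ∪ J)) ≤ Real.sqrt ((d - c) / (I'.card : ℝ)) := by
      intro I' hI' hsub
      have h1 := hsq hI' hU hsub
      have h2 : ‖avgLp hX I' - avgLp hX (I ∪ J)‖ ^ 2 ≤ (d - c) / (I'.card : ℝ) := by
        rw [h1]
        have h3 : 0 ≤ (d - c) * (1 / (((I ∪ J).card : ℕ) : ℝ)) := by positivity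
        have h4 : (d - c) * (1 / ((I'.card : ℕ) : ℝ) - 1 / (((I ∪ J).card : ℕ) : ℝ))
            = (d - c) / ((I'.card : ℕ) : ℝ) - (d - c) * (1 / (((I ∪ J).card : ℕ) : ℝ)) := by
          ring
        rw [h4]
        linarith
      have := Real.sqrt_le_sqrt h2
      rwa [Real.sqrt_sq (norm_nonneg _), ← dist_eq_norm] at this
    calc dist (avgLp hX I) (avgLp hX J)
        ≤ dist (avgLp hX I) (avgLp hX (I ∪ J)) + dist (avgLp hX (I ∪ J)) (avgLp hX J) :=
          dist_triangle _ _ _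
      _ ≤ Real.sqrt ((d - c) / (I.card : ℝ)) + Real.sqrt ((d - c) / (J.card : ℝ)) := by
          have h1 := key I hI Finset.subset_union_left
          have h2 := key J hJ Finset.subset_union_right
          rw [dist_comm] at h2
          linarith
  -- the range sequence is Cauchy
  have hb0 : Filter.Tendsto (fun n : ℕ => Real.sqrt ((d - c) / (n : ℝ))) Filter.atTop (nhds 0) := by
    have h1 : Filter.Tendsto (fun n : ℕ => (d - c) / (n : ℝ)) Filter.atTop (nhds 0) :=
      tendsto_const_nhds.div_atTop tendsto_natCast_atTop_atTop
    have h2 := (Real.continuous_sqrt.tendsto 0).comp h1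
    rw [Real.sqrt_zero] at h2
    exact h2
  have hcauchy : CauchySeq (fun N => avgLp hX (Finset.range (N + 1))) := by
    refine cauchySeq_of_le_tendsto_0 (fun N => 2 * Real.sqrt ((d - c) / ((N : ℝ) + 1)))
      (fun n m N hn hm => ?_) ?_
    ·
      have h := hdist (Finset.range (n + 1)) (Finset.range (m + 1))
        Finset.nonempty_range_add_one Finset.nonempty_range_add_one
      rw [Finset.card_range, Finset.card_range] at h
      have hmono : ∀ k : ℕ, N ≤ k →
          Real.sqrt ((d - c) / ((k : ℝ) + 1)) ≤ Real.sqrt ((d - c) / ((N : ℝ) + 1)) := by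
        intro k hk
        apply Real.sqrt_le_sqrt
        apply div_le_div_of_nonneg_left hdc (by positivity)
        exact_mod_cast Nat.succ_le_succ hk
      push_cast at h ⊢
      linarith [hmono n hn, hmono m hm]
    · have t2 := hb0.comp (Filter.tendsto_add_atTop_nat 1)
      have t3 : Filter.Tendsto (fun N : ℕ => Real.sqrt ((d - c) / ((N : ℝ) + 1)))
          Filter.atTop (nhds 0) := by
        have he : (fun N : ℕ => Real.sqrt ((d - c) / ((N : ℝ) + 1)))
            = (fun n : ℕ => Real.sqrt ((d - c) / (n : ℝ))) ∘ (fun a => a + 1) := by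
          funext N
          simp only [Function.comp_apply]
          push_cast
          rfl
        rw [he]
        exact t2
      simpa using t3.const_mul (2:ℝ)
  obtain ⟨G, hG⟩ := cauchySeq_tendsto_of_complete hcauchy
  refine ⟨G, fun I hI hIcard => ?_⟩
  rw [tendsto_iff_dist_tendsto_zero]
  have hbound : ∀ N, dist (avgLp hX (I N)) G ≤
      Real.sqrt ((d - c) / ((I N).card : ℝ)) + Real.sqrt ((d - c) / ((N : ℝ) + 1)) +
        dist (avgLp hX (Finset.range (N + 1))) G := by
    intro N
    have h := hdist (I N) (Finset.range (N + 1)) (hI N) Finset.nonempty_range_add_one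
    rw [Finset.card_range] at h
    have := dist_triangle (avgLp hX (I N)) (avgLp hX (Finset.range (N + 1))) G
    push_cast at h ⊢
    linarith
  apply squeeze_zero (fun N => dist_nonneg) hbound
  have t1 : Filter.Tendsto (fun N => Real.sqrt ((d - c) / (((I N).card : ℕ) : ℝ)))
      Filter.atTop (nhds 0) := hb0.comp hIcard
  have t2 : Filter.Tendsto (fun N : ℕ => Real.sqrt ((d - c) / ((N : ℝ) + 1)))
      Filter.atTop (nhds 0) := by
    have t2' := hb0.comp (Filter.tendsto_add_atTop_nat 1)
    have he : (fun N : ℕ => Real.sqrt ((d - c) / ((N : ℝ) + 1)))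
        = (fun n : ℕ => Real.sqrt ((d - c) / (n : ℝ))) ∘ (fun a => a + 1) := by
      funext N
      simp only [Function.comp_apply]
      push_cast
      rfl
    rw [he]
    exact t2'
  have t3 : Filter.Tendsto (fun N => dist (avgLp hX (Finset.range (N + 1))) G)
      Filter.atTop (nhds 0) := tendsto_iff_dist_tendsto_zero.mp hG
  simpa using (t1.add t2).add t3



variable {K : Type*} [MeasurableSpace K] {S : Type*}

/-- Restriction to coordinates in `A`. -/
def restr (A : Set S) : (S → K) → (A → K) := fun ω a => ω a

lemma measurable_restr (A : Set S) : Measurable (restr (K := K) A) :=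
  measurable_pi_lambda _ fun _ => measurable_pi_apply _

/-- σ-algebra generated by coordinates in `A`. -/
def mA (K : Type*) [MeasurableSpace K] {S : Type*} (A : Set S) : MeasurableSpace (S → K) :=
  MeasurableSpace.comap (restr A) MeasurableSpace.pi

lemma mA_le (A : Set S) : mA K A ≤ MeasurableSpace.pi :=
  (measurable_restr A).comap_le

lemma measurable_restr_mA (A : Set S) : Measurable[mA K A] (restr (K := K) A) :=
  measurable_iff_comap_le.mpr le_rfl

lemma measurable_coord_mA {A : Set S} {t : S} (ht : t ∈ A) :
    Measurable[mA K A] (fun ω : S → K => ω t) :=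
  (measurable_pi_apply (⟨t, ht⟩ : A)).comp (measurable_restr_mA A)

lemma mA_mono {A B : Set S} (hAB : A ⊆ B) : mA K A ≤ mA K B := by
  have hcomp : restr (K := K) A = (fun x : B → K => fun a : A => x ⟨a, hAB a.2⟩) ∘ restr B := rfl
  rw [mA, hcomp, ← MeasurableSpace.comap_comp]
  exact MeasurableSpace.comap_mono
    (Measurable.comap_le (measurable_pi_lambda _ fun _ => measurable_pi_apply _))

/-- The π-system of cylinders over coordinates in `A`. -/
def cylSys (K : Type*) [MeasurableSpace K] {S : Type*} (A : Set S) : Set (Set (S → K)) :=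
  (fun B => restr (K := K) A ⁻¹' B) '' measurableCylinders (fun _ : A => K)

lemma mA_generateFrom (A : Set S) :
    mA K A = MeasurableSpace.generateFrom (cylSys K A) := by
  rw [mA, ← generateFrom_measurableCylinders, MeasurableSpace.comap_generateFrom]
  rfl

lemma isPiSystem_cylSys (A : Set S) : IsPiSystem (cylSys K A) := by
  rintro _ ⟨C₁, h₁, rfl⟩ _ ⟨C₂, h₂, rfl⟩ hne
  refine ⟨C₁ ∩ C₂, isPiSystem_measurableCylinders C₁ h₁ C₂ h₂ ?_, by simp [Set.preimage_inter]⟩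
  obtain ⟨x, hx⟩ := hne
  exact ⟨restr A x, hx.1, hx.2⟩

/-- Every cylinder set over `A` is determined by finitely many coordinates in `A`. -/
lemma cylSys_determined {A : Set S} {B : Set (S → K)} (hB : B ∈ cylSys K A) :
    ∃ F : Finset S, (↑F ⊆ A) ∧
      ∀ ω ω' : S → K, (∀ t ∈ F, ω t = ω' t) → (ω ∈ B ↔ ω' ∈ B) := by
  classical
  obtain ⟨C, hC, rfl⟩ := hB
  obtain ⟨fs, T, _, rfl⟩ := (mem_measurableCylinders C).mp hC
  refine ⟨fs.image (fun a : A => (a : S)), ?_, ?_⟩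
  · intro t ht
    simp only [Finset.coe_image, Set.mem_image, Finset.mem_coe] at ht
    obtain ⟨a, _, rfl⟩ := ht
    exact a.2
  · intro ω ω' h
    simp only [Set.mem_preimage, mem_cylinder]
    have heq : fs.restrict (restr (K := K) A ω) = fs.restrict (restr (K := K) A ω') := by
      funext i
      exact h _ (Finset.mem_image_of_mem _ i.2)
    rw [heq]



variable {K : Type*} [MeasurableSpace K] {S : Type*}

lemma swap_support_finite [DecidableEq S] (a b : S) :
    {x | Equiv.swap a b x ≠ x}.Finite := by
  apply ((Set.finite_singleton b).insert a).subset
  intro x hx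
  by_contra h
  simp only [Set.mem_insert_iff, Set.mem_singleton_iff] at h
  push_neg at h
  exact hx (Equiv.swap_apply_of_ne_of_ne h.1 h.2)

lemma trans_support_finite (g₁ g₂ : Equiv.Perm S) (h₁ : {x | g₁ x ≠ x}.Finite)
    (h₂ : {x | g₂ x ≠ x}.Finite) : {x | (g₁.trans g₂) x ≠ x}.Finite := by
  apply (h₁.union h₂).subset
  intro x hx
  by_contra h
  simp only [Set.mem_union, Set.mem_setOf_eq] at h
  push_neg at h
  exact hx (by simp [Equiv.trans_apply, h.1, h.2])

variable {μ : Measure (S → K)} [IsProbabilityMeasure μ]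

lemma integral_comp_perm
    (hμ : ∀ g : Equiv.Perm S, {x | g x ≠ x}.Finite →
      Measure.map (fun ω : S → K => fun t => ω (g t)) μ = μ)
    (g : Equiv.Perm S) (hg : {x | g x ≠ x}.Finite)
    {h : (S → K) → ℝ} (hh : AEStronglyMeasurable h μ) :
    ∫ ω, h ω ∂μ = ∫ ω, h (fun t => ω (g t)) ∂μ := by
  have hT : Measurable (fun ω : S → K => fun t => ω (g t)) :=
    measurable_pi_lambda _ fun t => measurable_pi_apply _
  have hh' : AEStronglyMeasurable h (Measure.map (fun ω : S → K => fun t => ω (g t)) μ) := by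
    rwa [hμ g hg]
  rw [← integral_map hT.aemeasurable hh', hμ g hg]

/-- Swapping two coordinates in a set integral over an invariant set. -/
lemma setIntegral_coord_swap [DecidableEq S]
    (hμ : ∀ g : Equiv.Perm S, {x | g x ≠ x}.Finite →
      Measure.map (fun ω : S → K => fun t => ω (g t)) μ = μ)
    (a b : S) {φ : K → ℝ} (hφ : Measurable φ)
    {V : Set (S → K)} (hV : MeasurableSet V)
    (hVinv : ∀ ω : S → K, ((fun t => ω (Equiv.swap a b t)) ∈ V ↔ ω ∈ V)) :
    ∫ ω in V, φ (ω a) ∂μ = ∫ ω in V, φ (ω b) ∂μ := by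
  classical
  have hmeas : ∀ t : S, AEStronglyMeasurable
      (V.indicator (fun ω : S → K => φ (ω t))) μ :=
    fun t => ((hφ.comp (measurable_pi_apply t)).indicator hV).aestronglyMeasurable
  rw [← integral_indicator hV, ← integral_indicator hV]
  rw [integral_comp_perm hμ (Equiv.swap a b) (swap_support_finite a b) (hmeas a)]
  congr 1
  funext ω
  by_cases hω : ω ∈ V
  · rw [Set.indicator_of_mem ((hVinv ω).mpr hω), Set.indicator_of_mem hω]
    simp [Equiv.swap_apply_left]
  · rw [Set.indicator_of_notMem (fun hc => hω ((hVinv ω).mp hc)),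
      Set.indicator_of_notMem hω]

/-- Moving a pair of distinct coordinates. -/
lemma integral_pair_swap
    (hμ : ∀ g : Equiv.Perm S, {x | g x ≠ x}.Finite →
      Measure.map (fun ω : S → K => fun t => ω (g t)) μ = μ)
    {φ : K → ℝ} (hφ : Measurable φ)
    {a b p q : S} (hab : a ≠ b) (hpq : p ≠ q) (hpa : p ≠ a) (hpb : p ≠ b)
    (hqa : q ≠ a) (hqb : q ≠ b) :
    ∫ ω, φ (ω a) * φ (ω b) ∂μ = ∫ ω, φ (ω p) * φ (ω q) ∂μ := by
  classical
  set g : Equiv.Perm S := (Equiv.swap a p).trans (Equiv.swap b q) with hg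
  have hsupp : {x | g x ≠ x}.Finite :=
    trans_support_finite _ _ (swap_support_finite a p) (swap_support_finite b q)
  have hmeas : AEStronglyMeasurable (fun ω : S → K => φ (ω a) * φ (ω b)) μ :=
    ((hφ.comp (measurable_pi_apply a)).mul (hφ.comp (measurable_pi_apply b))).aestronglyMeasurable
  rw [integral_comp_perm hμ g hsupp hmeas]
  have hga : g a = p := by
    simp only [hg, Equiv.trans_apply, Equiv.swap_apply_left]
    exact Equiv.swap_apply_of_ne_of_ne hpb hpq
  have hgb : g b = q := by
    simp only [hg, Equiv.trans_apply]
    rw [Equiv.swap_apply_of_ne_of_ne (Ne.symm hab) (Ne.symm hpb), Equiv.swap_apply_left]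
  simp only [hga, hgb]


section Key

variable {K : Type*} [MeasurableSpace K] {S : Type*}
variable {S₁ S₂ : Set S} {μ : Measure (S → K)} [IsProbabilityMeasure μ]

set_option maxHeartbeats 1000000 in
set_option synthInstance.maxHeartbeats 1000000 in
theorem key (hdisj : Disjoint S₁ S₂) (h₂ : S₂.Infinite)
    (hμ : ∀ g : Equiv.Perm S, {x | g x ≠ x}.Finite →
      Measure.map (fun ω : S → K => fun t => ω (g t)) μ = μ)
    {s : S} (hs : s ∈ S₁) {f : K → ℝ} (hf : Measurable f)
    {C : ℝ} (hC : ∀ x, |f x| ≤ C) (hC0 : 0 ≤ C)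
    {V : Set (S → K)} (hV : MeasurableSet V) (F : Finset S) (hsF : s ∉ F)
    (hVF : ∀ ω ω' : S → K, (∀ t ∈ F, ω t = ω' t) → (ω ∈ V ↔ ω' ∈ V)) :
    ∫ ω in V, (μ[(fun ω' => f (ω' s)) | mA K S₂]) ω ∂μ = ∫ ω in V, f (ω s) ∂μ := by
  classical
  -- the sequence of fresh coordinates in S₂
  set u : ℕ → S := fun n => ((Set.Infinite.natEmbedding S₂ h₂) n : S) with hu
  have hu_mem : ∀ n, u n ∈ S₂ := fun n => ((Set.Infinite.natEmbedding S₂ h₂) n).2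
  have hu_inj : Function.Injective u :=
    fun m n h => (Set.Infinite.natEmbedding S₂ h₂).injective (Subtype.coe_injective h)
  have hu_ne_s : ∀ n, u n ≠ s := fun n h =>
    Set.disjoint_left.mp hdisj hs (h ▸ hu_mem n)
  -- the random variables
  set X : ℕ → (S → K) → ℝ := fun j ω => f (ω (u j)) with hX
  have hXmeas : ∀ j, Measurable (X j) := fun j => hf.comp (measurable_pi_apply _)
  have hXmem : ∀ j, MemLp (X j) 2 μ := fun j =>
    (memLp_top_of_bound (hXmeas j).aestronglyMeasurable C
      (Filter.Eventually.of_forall (fun ω => hC _))).mono_exponent le_top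
  have hXint : ∀ j k, Integrable (fun ω => X j ω * X k ω) μ := by
    intro j k
    refine integrable_of_bdd (((hXmeas j).mul (hXmeas k)).aestronglyMeasurable) (C := C * C) ?_
    intro ω
    rw [abs_mul]
    exact mul_le_mul (hC _) (hC _) (abs_nonneg _) hC0
  -- covariance constants
  set cc : ℝ := ∫ ω, X 0 ω * X 1 ω ∂μ with hcc
  set dd : ℝ := ∫ ω, X 0 ω * X 0 ω ∂μ with hdd
  have hpair : ∀ a b : S, a ≠ b → ∫ ω, f (ω a) * f (ω b) ∂μ = cc := by
    intro a b hab
    have hTfin : ({a, b, u 0, u 1} : Set S).Finite := by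
      apply Set.Finite.insert; apply Set.Finite.insert; apply Set.Finite.insert
      exact Set.finite_singleton _
    obtain ⟨p, hp⟩ := ((h₂.diff hTfin).nonempty)
    have hTfin2 : ({a, b, u 0, u 1, p} : Set S).Finite := by
      apply Set.Finite.insert; apply Set.Finite.insert; apply Set.Finite.insert
      apply Set.Finite.insert; exact Set.finite_singleton _
    obtain ⟨q, hq⟩ := ((h₂.diff hTfin2).nonempty)
    simp only [Set.mem_diff, Set.mem_insert_iff, Set.mem_singleton_iff] at hp hq
    push_neg at hp hq
    have h1 : ∫ ω, f (ω a) * f (ω b) ∂μ = ∫ ω, f (ω p) * f (ω q) ∂μ :=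
      integral_pair_swap hμ hf hab (fun h => hq.2.2.2.2.2 h.symm) hp.2.1 hp.2.2.1 hq.2.1 hq.2.2.1
    have h2 : ∫ ω, X 0 ω * X 1 ω ∂μ = ∫ ω, f (ω p) * f (ω q) ∂μ := by
      refine integral_pair_swap hμ hf (fun h => ?_) (fun h => hq.2.2.2.2.2 h.symm)
        hp.2.2.2.1 hp.2.2.2.2 hq.2.2.2.1 hq.2.2.2.2.1
      exact Nat.zero_ne_one (hu_inj h)
    rw [h1, hcc, h2]
  have hcov : ∀ j k, j ≠ k → ∫ ω, X j ω * X k ω ∂μ = cc := fun j k hjk =>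
    hpair (u j) (u k) (fun h => hjk (hu_inj h))
  have hvar : ∀ j, ∫ ω, X j ω * X j ω ∂μ = dd := by
    intro j
    have := setIntegral_coord_swap (μ := μ) hμ (u j) (u 0)
      (φ := fun x => f x * f x) (hf.mul hf) MeasurableSet.univ
      (fun ω => by simp)
    simpa [Measure.restrict_univ] using this
  obtain ⟨G, hG⟩ := exists_L2_limit hXmem hXint hcov hvar
  have hfs_int : Integrable (fun ω : S → K => f (ω s)) μ :=
    integrable_of_bdd (hf.comp (measurable_pi_apply s)).aestronglyMeasurable (fun ω => hC _)
  -- tail property: set integrals of G over finitely-determined sets avoiding s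
  have tail : ∀ (W : Set (S → K)), MeasurableSet W → ∀ (Fw : Finset S), s ∉ Fw →
      (∀ ω ω' : S → K, (∀ t ∈ Fw, ω t = ω' t) → (ω ∈ W ↔ ω' ∈ W)) →
      ∫ ω in W, (G : (S → K) → ℝ) ω ∂μ = ∫ ω in W, f (ω s) ∂μ := by
    intro W hW Fw hsFw hWinv
    have hfin : {j : ℕ | u j ∈ Fw}.Finite :=
      Set.Finite.preimage hu_inj.injOn Fw.finite_toSet
    obtain ⟨N₀, hN₀⟩ : ∃ N₀, ∀ j, N₀ ≤ j → u j ∉ (Fw : Finset S) := by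
      obtain ⟨b, hb⟩ := hfin.bddAbove
      exact ⟨b + 1, fun j hj hmem => by have := hb hmem; omega⟩
    have hcoord : ∀ j, N₀ ≤ j → ∫ ω in W, f (ω (u j)) ∂μ = ∫ ω in W, f (ω s) ∂μ := by
      intro j hj
      refine setIntegral_coord_swap hμ (u j) s hf hW ?_
      intro ω
      apply hWinv
      intro t ht
      have h1 : t ≠ u j := fun h => (hN₀ j hj) (h ▸ ht)
      have h2 : t ≠ s := fun h => hsFw (h ▸ ht)
      rw [Equiv.swap_apply_of_ne_of_ne h1 h2]
    set oneW : Lp ℝ 2 μ := indicatorConstLp 2 hW (measure_ne_top μ W) (1 : ℝ) with honeW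
    have hIco : ∀ N : ℕ, (inner ℝ oneW (avgLp hXmem (Finset.Ico N₀ (N₀ + N + 1))) : ℝ)
        = ∫ ω in W, f (ω s) ∂μ := by
      intro N
      have hcard : (Finset.Ico N₀ (N₀ + N + 1)).card = N + 1 := by
        rw [Nat.card_Ico]; omega
      rw [honeW, L2.inner_indicatorConstLp_one hW (measure_ne_top μ W)]
      rw [integral_congr_ae (ae_restrict_of_ae (avgLp_coe hXmem (Finset.Ico N₀ (N₀ + N + 1))))]
      rw [integral_const_mul, integral_finset_sum _ (fun j _ =>
        (integrable_of_bdd (hXmeas j).aestronglyMeasurable (fun ω => hC _)).integrableOn)]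
      rw [Finset.sum_congr rfl (fun j hj => hcoord j (Finset.mem_Ico.mp hj).1)]
      rw [Finset.sum_const, hcard, nsmul_eq_mul]
      have : ((N : ℝ) + 1) ≠ 0 := by positivity
      field_simp
    have hne : ∀ N : ℕ, (Finset.Ico N₀ (N₀ + N + 1)).Nonempty :=
      fun N => ⟨N₀, Finset.mem_Ico.mpr ⟨le_rfl, by omega⟩⟩
    have hcardT : Tendsto (fun N => (Finset.Ico N₀ (N₀ + N + 1)).card) atTop atTop :=
      tendsto_atTop_mono (fun N => by simp only [id_eq]; rw [Nat.card_Ico]; omega) tendsto_id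
    have hIcoTend : Tendsto (fun N => (inner ℝ oneW (avgLp hXmem (Finset.Ico N₀ (N₀ + N + 1))) : ℝ))
        atTop (nhds (inner ℝ oneW G)) :=
      Filter.Tendsto.inner tendsto_const_nhds (hG _ hne hcardT)
    have h5 : Tendsto (fun _ : ℕ => ∫ ω in W, f (ω s) ∂μ) atTop (nhds (inner ℝ oneW G : ℝ)) := by
      rw [show (fun _ : ℕ => ∫ ω in W, f (ω s) ∂μ)
          = fun N => (inner ℝ oneW (avgLp hXmem (Finset.Ico N₀ (N₀ + N + 1))) : ℝ) from
        funext fun N => (hIco N).symm]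
      exact hIcoTend
    have h6 : (inner ℝ oneW G : ℝ) = ∫ ω in W, f (ω s) ∂μ :=
      tendsto_nhds_unique h5 tendsto_const_nhds
    rw [← h6, honeW, L2.inner_indicatorConstLp_one hW (measure_ne_top μ W)]
  -- G is a.e. measurable with respect to mA K S₂
  have hGmeas : AEStronglyMeasurable[mA K S₂] (G : (S → K) → ℝ) μ := by
    have hmem : ∀ N, avgLp hXmem (Finset.range (N + 1))
        ∈ {x : Lp ℝ 2 μ | AEStronglyMeasurable[mA K S₂] x μ} := by
      intro N
      refine ⟨fun ω => (((Finset.range (N + 1)).card : ℝ))⁻¹ * ∑ j ∈ Finset.range (N + 1), X j ω,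
        ?_, avgLp_coe hXmem (Finset.range (N + 1))⟩
      refine Measurable.stronglyMeasurable ?_
      refine Measurable.const_mul ?_ _
      refine Finset.measurable_sum _ (fun j _ => ?_)
      exact hf.comp (measurable_coord_mA (hu_mem j))
    have hclosed : IsClosed {x : Lp ℝ 2 μ | AEStronglyMeasurable[mA K S₂] x μ} :=
      (isComplete_aestronglyMeasurable (mA_le S₂)).isClosed
    have hGmem : G ∈ {x : Lp ℝ 2 μ | AEStronglyMeasurable[mA K S₂] x μ} := by
      have hrange : Tendsto (fun N => avgLp hXmem (Finset.range (N + 1))) atTop (nhds G) :=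
        hG _ (fun N => Finset.nonempty_range_add_one)
          (tendsto_atTop_mono (fun N => by simp only [id_eq]; rw [Finset.card_range]; omega) tendsto_id)
      exact hclosed.mem_of_tendsto hrange (Filter.Eventually.of_forall hmem)
    exact hGmem
  have hGint : Integrable (G : (S → K) → ℝ) μ := (Lp.memLp G).integrable one_le_two
  haveI : SigmaFinite (μ.trim (mA_le S₂ : mA K S₂ ≤ _)) := by
    have : IsFiniteMeasure (μ.trim (mA_le S₂ : mA K S₂ ≤ _)) := isFiniteMeasure_trim _
    infer_instance
  have hGae : (G : (S → K) → ℝ) =ᵐ[μ] μ[(fun ω => f (ω s)) | mA K S₂] := by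
    refine ae_eq_condExp_of_forall_setIntegral_eq (mA_le S₂) hfs_int
      (fun B _ _ => hGint.integrableOn) (fun B hB _ => ?_) hGmeas
    refine setIntegral_eq_on_of_generateFrom (mA_le S₂) (isPiSystem_cylSys S₂)
      (mA_generateFrom S₂) hGint hfs_int ?_ ?_ hB
    · have := tail Set.univ MeasurableSet.univ ∅ (Finset.notMem_empty s)
        (fun ω ω' _ => Iff.rfl)
      simpa [Measure.restrict_univ] using this
    · intro B' hBP
      obtain ⟨Fb, hFbsub, hFbdet⟩ := cylSys_determined hBP
      have hsFb : s ∉ Fb := fun h => Set.disjoint_left.mp hdisj hs (hFbsub h)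
      have hBmeas : MeasurableSet B' := mA_le S₂ _
        (by rw [mA_generateFrom]; exact MeasurableSpace.measurableSet_generateFrom hBP)
      exact tail B' hBmeas Fb hsFb hFbdet
  calc ∫ ω in V, (μ[(fun ω' => f (ω' s)) | mA K S₂]) ω ∂μ
      = ∫ ω in V, (G : (S → K) → ℝ) ω ∂μ :=
        integral_congr_ae (ae_restrict_of_ae hGae.symm)
    _ = ∫ ω in V, f (ω s) ∂μ := tail V hV F hsF hVF



set_option maxHeartbeats 1000000 in
theorem condexp_compl (hdisj : Disjoint S₁ S₂) (h₂ : S₂.Infinite)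
    (hμ : ∀ g : Equiv.Perm S, {x | g x ≠ x}.Finite →
      Measure.map (fun ω : S → K => fun t => ω (g t)) μ = μ)
    {s : S} (hs : s ∈ S₁) {f : K → ℝ} (hf : Measurable f)
    {C : ℝ} (hC : ∀ x, |f x| ≤ C) (hC0 : 0 ≤ C) :
    μ[(fun ω => f (ω s)) | mA K ({s}ᶜ : Set S)] =ᵐ[μ] μ[(fun ω => f (ω s)) | mA K S₂] := by
  haveI : SigmaFinite (μ.trim (mA_le ({s}ᶜ : Set S) : mA K ({s}ᶜ : Set S) ≤ _)) := by
    have : IsFiniteMeasure (μ.trim (mA_le ({s}ᶜ : Set S) : mA K ({s}ᶜ : Set S) ≤ _)) :=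
      isFiniteMeasure_trim _
    infer_instance
  haveI : SigmaFinite (μ.trim (mA_le S₂ : mA K S₂ ≤ _)) := by
    have : IsFiniteMeasure (μ.trim (mA_le S₂ : mA K S₂ ≤ _)) := isFiniteMeasure_trim _
    infer_instance
  have hfs_int : Integrable (fun ω : S → K => f (ω s)) μ :=
    integrable_of_bdd (hf.comp (measurable_pi_apply s)).aestronglyMeasurable (fun ω => hC _)
  have hsub : S₂ ⊆ ({s}ᶜ : Set S) := fun t ht hts => by
    simp only [Set.mem_singleton_iff] at hts
    exact Set.disjoint_left.mp hdisj hs (hts ▸ ht)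
  refine (ae_eq_condExp_of_forall_setIntegral_eq (mA_le ({s}ᶜ : Set S)) hfs_int
    (fun B _ _ => integrable_condExp.integrableOn) (fun B hB _ => ?_) ?_).symm
  · refine setIntegral_eq_on_of_generateFrom (mA_le ({s}ᶜ : Set S))
      (isPiSystem_cylSys ({s}ᶜ : Set S)) (mA_generateFrom _) integrable_condExp hfs_int ?_ ?_ hB
    · have h0 := key hdisj h₂ hμ hs hf hC hC0 MeasurableSet.univ ∅
        (Finset.notMem_empty s) (fun ω ω' _ => Iff.rfl)
      simpa [Measure.restrict_univ, integral_condExp (mA_le S₂)] using h0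
    · intro B' hBP
      obtain ⟨Fb, hFbsub, hFbdet⟩ := cylSys_determined hBP
      have hsFb : s ∉ Fb := fun h => (hFbsub h) rfl
      have hBmeas : MeasurableSet B' := mA_le ({s}ᶜ : Set S) _
        (by rw [mA_generateFrom]; exact MeasurableSpace.measurableSet_generateFrom hBP)
      exact key hdisj h₂ hμ hs hf hC hC0 hBmeas Fb hsFb hFbdet
  · exact (stronglyMeasurable_condExp.mono (mA_mono hsub)).aestronglyMeasurable

set_option maxHeartbeats 1000000 in
theorem step (hdisj : Disjoint S₁ S₂) (h₂ : S₂.Infinite)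
    (hμ : ∀ g : Equiv.Perm S, {x | g x ≠ x}.Finite →
      Measure.map (fun ω : S → K => fun t => ω (g t)) μ = μ)
    {s : S} (hs : s ∈ S₁) {f : K → ℝ} (hf : Measurable f)
    {C : ℝ} (hC : ∀ x, |f x| ≤ C) (hC0 : 0 ≤ C)
    {R : (S → K) → ℝ} (hR : StronglyMeasurable[mA K ({s}ᶜ : Set S)] R)
    {D : ℝ} (hRD : ∀ ω, |R ω| ≤ D) :
    ∫ ω, f (ω s) * R ω ∂μ = ∫ ω, (μ[(fun ω' => f (ω' s)) | mA K S₂]) ω * R ω ∂μ := by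
  have hm₁ : mA K ({s}ᶜ : Set S) ≤ _ := mA_le ({s}ᶜ : Set S)
  haveI : SigmaFinite (μ.trim hm₁) := by
    have : IsFiniteMeasure (μ.trim hm₁) := isFiniteMeasure_trim _
    infer_instance
  have hfs_int : Integrable (fun ω : S → K => f (ω s)) μ :=
    integrable_of_bdd (hf.comp (measurable_pi_apply s)).aestronglyMeasurable (fun ω => hC _)
  have hRmeas : AEStronglyMeasurable R μ := (hR.mono hm₁).aestronglyMeasurable
  have hfR_int : Integrable (R * (fun ω : S → K => f (ω s))) μ := by
    refine integrable_of_bdd (hRmeas.mul (hf.comp (measurable_pi_apply s)).aestronglyMeasurable)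
      (C := D * C) ?_
    intro ω
    simp only [Pi.mul_apply]
    rw [abs_mul]
    exact mul_le_mul (hRD _) (hC _) (abs_nonneg _) (le_trans (abs_nonneg _) (hRD ω))
  have h1 : μ[R * (fun ω : S → K => f (ω s)) | mA K ({s}ᶜ : Set S)]
      =ᵐ[μ] R * μ[(fun ω : S → K => f (ω s)) | mA K ({s}ᶜ : Set S)] :=
    condExp_mul_of_stronglyMeasurable_left hR hfR_int hfs_int
  have h2 := condexp_compl (μ := μ) hdisj h₂ hμ hs hf hC hC0
  calc ∫ ω, f (ω s) * R ω ∂μ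
      = ∫ ω, (R * (fun ω' : S → K => f (ω' s))) ω ∂μ := by
        congr 1; funext ω; simp [mul_comm]
    _ = ∫ ω, (μ[R * (fun ω' : S → K => f (ω' s)) | mA K ({s}ᶜ : Set S)]) ω ∂μ :=
        (integral_condExp hm₁).symm
    _ = ∫ ω, (R * μ[(fun ω' : S → K => f (ω' s)) | mA K ({s}ᶜ : Set S)]) ω ∂μ :=
        integral_congr_ae h1
    _ = ∫ ω, (μ[(fun ω' : S → K => f (ω' s)) | mA K S₂]) ω * R ω ∂μ := by
        refine integral_congr_ae ?_
        filter_upwards [h2] with ω hω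
        simp only [Pi.mul_apply]
        rw [hω, mul_comm]

set_option maxHeartbeats 1000000 in
theorem prod_claim (hdisj : Disjoint S₁ S₂) (h₂ : S₂.Infinite)
    (hμ : ∀ g : Equiv.Perm S, {x | g x ≠ x}.Finite →
      Measure.map (fun ω : S → K => fun t => ω (g t)) μ = μ) :
    ∀ (n : ℕ) (s : Fin n → S), Function.Injective s → (∀ i, s i ∈ S₁) →
      ∀ (f : Fin n → K → ℝ), (∀ i, Measurable (f i)) →
      ∀ (C : Fin n → ℝ), (∀ i x, |f i x| ≤ C i) → (∀ i, 0 ≤ C i) →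
      ∀ (Ef : Fin n → (S → K) → ℝ), (∀ i, StronglyMeasurable[mA K S₂] (Ef i)) →
        (∀ i ω, |Ef i ω| ≤ C i) →
        (∀ i, Ef i =ᵐ[μ] μ[(fun ω => f i (ω (s i))) | mA K S₂]) →
      ∀ (R : (S → K) → ℝ), StronglyMeasurable[mA K S₂] R → ∀ (D : ℝ), (∀ ω, |R ω| ≤ D) →
      ∫ ω, (∏ i, f i (ω (s i))) * R ω ∂μ = ∫ ω, (∏ i, Ef i ω) * R ω ∂μ := by
  intro n
  induction n with
  | zero =>
    intro _ _ _ _ _ _ _ _ _ _ _ _ R _ D _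
    simp
  | succ n ih =>
    intro s hsinj hsmem f hf C hC hC0 Ef hEfm hEfb hEfae R hR D hRD
    set l : Fin (n + 1) := Fin.last n with hl
    have hsub : S₂ ⊆ ({s l}ᶜ : Set S) := fun t ht hts => by
      simp only [Set.mem_singleton_iff] at hts
      exact Set.disjoint_left.mp hdisj (hsmem l) (hts ▸ ht)
    have hne : ∀ i : Fin n, s i.castSucc ≠ s l := fun i h =>
      (Fin.castSucc_lt_last i).ne (hsinj h)
    -- the passive product
    set P : (S → K) → ℝ := fun ω => ∏ i : Fin n, f i.castSucc (ω (s i.castSucc)) with hP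
    have hPmeas : StronglyMeasurable[mA K ({s l}ᶜ : Set S)] P := by
      refine Measurable.stronglyMeasurable ?_
      refine Finset.measurable_prod _ (fun i _ => ?_)
      exact (hf _).comp (measurable_coord_mA (hne i))
    have hPbd : ∀ ω, |P ω| ≤ ∏ i : Fin n, C i.castSucc := by
      intro ω
      rw [hP, Finset.abs_prod]
      exact Finset.prod_le_prod (fun i _ => abs_nonneg _) (fun i _ => hC _ _)
    have hPC0 : 0 ≤ ∏ i : Fin n, C i.castSucc :=
      Finset.prod_nonneg (fun i _ => hC0 _)
    have hR' : StronglyMeasurable[mA K ({s l}ᶜ : Set S)] (fun ω => P ω * R ω) :=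
      hPmeas.mul (hR.mono (mA_mono hsub))
    have hR'bd : ∀ ω, |P ω * R ω| ≤ (∏ i : Fin n, C i.castSucc) * D := by
      intro ω
      rw [abs_mul]
      exact mul_le_mul (hPbd ω) (hRD ω) (abs_nonneg _) hPC0
    have hstep := step hdisj h₂ hμ (hsmem l) (hf l) (hC l) (hC0 l) hR' hR'bd
    have hih := ih (fun i => s i.castSucc) (fun i j h => Fin.castSucc_injective n (hsinj h))
      (fun i => hsmem _) (fun i => f i.castSucc) (fun i => hf _)
      (fun i => C i.castSucc) (fun i x => hC _ _) (fun i => hC0 _)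
      (fun i => Ef i.castSucc) (fun i => hEfm _) (fun i ω => hEfb _ _) (fun i => hEfae _)
      (fun ω => Ef l ω * R ω) ((hEfm l).mul hR) (C l * D)
      (fun ω => by
        rw [abs_mul]
        exact mul_le_mul (hEfb _ _) (hRD ω) (abs_nonneg _) (hC0 l))
    calc ∫ ω, (∏ i, f i (ω (s i))) * R ω ∂μ
        = ∫ ω, f l (ω (s l)) * (P ω * R ω) ∂μ := by
          refine integral_congr_ae (Filter.Eventually.of_forall (fun ω => ?_))
          simp only [Fin.prod_univ_castSucc]
          ring
      _ = ∫ ω, (μ[(fun ω' => f l (ω' (s l))) | mA K S₂]) ω * (P ω * R ω) ∂μ := hstep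
      _ = ∫ ω, P ω * (Ef l ω * R ω) ∂μ := by
          refine integral_congr_ae ?_
          filter_upwards [hEfae l] with ω hω
          rw [← hω]
          ring
      _ = ∫ ω, (∏ i : Fin n, Ef i.castSucc ω) * (Ef l ω * R ω) ∂μ := hih
      _ = ∫ ω, (∏ i, Ef i ω) * R ω ∂μ := by
          refine integral_congr_ae (Filter.Eventually.of_forall (fun ω => ?_))
          simp only [Fin.prod_univ_castSucc]
          ring

end Key

end DeFinettiAux


open DeFinettiAux in
set_option maxHeartbeats 1000000 in
set_option synthInstance.maxHeartbeats 1000000 in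
/-- variant of de Finetti's Theorem: if `μ` is an exchangeable law on `K^S` and
`S = S₁ ∪ S₂` is a partition into two infinite subsets, then the coordinates indexed by `S₁`
are conditionally independent given the σ-algebra generated by the coordinates in `S₂`, and all
the conditional expectations `E[f ∘ π_s | σ(π_{S₂})]` for `s ∈ S₁` agree a.s. -/
theorem deFinetti_variant
    {K : Type*} [MeasurableSpace K] [StandardBorelSpace K]
    {S : Type*} [Countable S]
    (S₁ S₂ : Set S) (hdisj : Disjoint S₁ S₂) (hunion : S₁ ∪ S₂ = Set.univ)
    (h₁ : S₁.Infinite) (h₂ : S₂.Infinite)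
    (μ : Measure (S → K)) [IsProbabilityMeasure μ]
    (hμ : ∀ g : Equiv.Perm S, {x | g x ≠ x}.Finite →
      Measure.map (fun ω : S → K => fun t => ω (g t)) μ = μ)
    -- the σ-algebra generated by the coordinates indexed by `S₂`
    (m₂ : MeasurableSpace (S → K))
    (hm₂ : m₂ = MeasurableSpace.comap (fun ω : S → K => fun s : S₂ => ω s) inferInstance) :
    -- conditional independence of the coordinates in `S₁` over `σ(π_{S₂})`
    (∀ (n : ℕ) (s : Fin n → S), Function.Injective s → (∀ i, s i ∈ S₁) →
      ∀ f : Fin n → K → ℝ, (∀ i, Measurable (f i)) → (∀ i, ∃ C, ∀ x, |f i x| ≤ C) →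
        μ[fun ω => ∏ i, f i (ω (s i)) | m₂]
          =ᵐ[μ] fun ω => ∏ i, (μ[fun ω' => f i (ω' (s i)) | m₂]) ω) ∧
    -- the one-coordinate conditional expectations agree for all vertices of `S₁`
    (∀ (s t : S), s ∈ S₁ → t ∈ S₁ → ∀ f : K → ℝ, Measurable f → (∃ C, ∀ x, |f x| ≤ C) →
      μ[fun ω => f (ω s) | m₂] =ᵐ[μ] μ[fun ω => f (ω t) | m₂]) := by
    classical
  have hm' : m₂ = mA K S₂ := hm₂
  subst hm'
  haveI : SigmaFinite (μ.trim (mA_le S₂ : mA K S₂ ≤ _)) := by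
    have : IsFiniteMeasure (μ.trim (mA_le S₂ : mA K S₂ ≤ _)) := isFiniteMeasure_trim _
    infer_instance
  constructor
  · -- conditional independence
    intro n s hsinj hsmem f hf hbd
    choose C hC using hbd
    set C' : Fin n → ℝ := fun i => max (C i) 0 with hC'def
    have hC' : ∀ i x, |f i x| ≤ C' i := fun i x => (hC i x).trans (le_max_left _ _)
    have hC'0 : ∀ i, 0 ≤ C' i := fun i => le_max_right _ _
    set E : Fin n → (S → K) → ℝ :=
      fun i => μ[(fun ω => f i (ω (s i))) | mA K S₂] with hEdef
    set Ef : Fin n → (S → K) → ℝ :=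
      fun i ω => max (-(C' i)) (min (C' i) (E i ω)) with hEfdef
    have hEfm : ∀ i, StronglyMeasurable[mA K S₂] (Ef i) := by
      intro i
      have hEmeas : Measurable[mA K S₂] (E i) :=
        (stronglyMeasurable_condExp (m := mA K S₂)).measurable
      exact (measurable_const.max (measurable_const.min hEmeas)).stronglyMeasurable
    have hEfb : ∀ i ω, |Ef i ω| ≤ C' i := by
      intro i ω
      rw [abs_le]
      constructor
      · exact (neg_le_neg (le_refl (C' i))).trans (le_max_left _ _)
      · exact max_le (by linarith [hC'0 i]) (min_le_left _ _)
    have hEfae : ∀ i, Ef i =ᵐ[μ] E i := by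
      intro i
      have hbdd : ∀ᵐ ω ∂μ, |f i (ω (s i))| ≤ ((⟨C' i, hC'0 i⟩ : NNReal) : ℝ) :=
        Filter.Eventually.of_forall (fun ω => hC' i _)
      have hbdd' := ae_bdd_condExp_of_ae_bdd (m := mA K S₂) hbdd
      filter_upwards [hbdd'] with ω hω
      change |_| ≤ C' i at hω
      rw [hEfdef]
      simp only
      rw [min_eq_right (abs_le.mp hω).2, max_eq_right (abs_le.mp hω).1]
    have hFmeas : Measurable (fun ω : S → K => ∏ i, f i (ω (s i))) :=
      Finset.measurable_prod _ (fun i _ => (hf i).comp (measurable_pi_apply _))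
    have hFbd : ∀ ω : S → K, |∏ i, f i (ω (s i))| ≤ ∏ i, C' i := by
      intro ω
      rw [Finset.abs_prod]
      exact Finset.prod_le_prod (fun i _ => abs_nonneg _) (fun i _ => hC' _ _)
    have hF_int : Integrable (fun ω : S → K => ∏ i, f i (ω (s i))) μ :=
      integrable_of_bdd hFmeas.aestronglyMeasurable hFbd
    have hProdEf_meas : StronglyMeasurable[mA K S₂] (fun ω => ∏ i, Ef i ω) := by
      apply Finset.stronglyMeasurable_fun_prod
      exact fun i _ => hEfm i
    have hProdEf_int : Integrable (fun ω => ∏ i, Ef i ω) μ := by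
      refine integrable_of_bdd ((hProdEf_meas.mono (mA_le S₂)).aestronglyMeasurable)
        (C := ∏ i, C' i) ?_
      intro ω
      rw [Finset.abs_prod]
      exact Finset.prod_le_prod (fun i _ => abs_nonneg _) (fun i _ => hEfb _ _)
    have hmain : (fun ω => ∏ i, Ef i ω) =ᵐ[μ]
        μ[(fun ω => ∏ i, f i (ω (s i))) | mA K S₂] := by
      refine ae_eq_condExp_of_forall_setIntegral_eq (mA_le S₂) hF_int
        (fun B _ _ => hProdEf_int.integrableOn) (fun B hB _ => ?_)
        hProdEf_meas.aestronglyMeasurable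
      have hBmeas : MeasurableSet B := mA_le S₂ _ hB
      have hind : StronglyMeasurable[mA K S₂] (B.indicator (fun _ => (1 : ℝ))) :=
        stronglyMeasurable_const.indicator hB
      have hindbd : ∀ ω, |B.indicator (fun _ => (1 : ℝ)) ω| ≤ 1 := by
        intro ω
        by_cases h : ω ∈ B <;> simp [h]
      have hclaim := prod_claim hdisj h₂ hμ n s hsinj hsmem f hf C' hC' hC'0 Ef hEfm hEfb
        (fun i => hEfae i) (B.indicator (fun _ => (1 : ℝ))) hind 1 hindbd
      have hrw : ∀ (g : (S → K) → ℝ),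
          (fun ω => g ω * B.indicator (fun _ => (1 : ℝ)) ω) = B.indicator g := by
        intro g
        funext ω
        by_cases h : ω ∈ B <;> simp [h]
      rw [hrw, hrw] at hclaim
      rw [integral_indicator hBmeas, integral_indicator hBmeas] at hclaim
      exact hclaim.symm
    have hprodeq : (fun ω => ∏ i, Ef i ω) =ᵐ[μ] fun ω => ∏ i, E i ω := by
      have hall : ∀ᵐ ω ∂μ, ∀ i, Ef i ω = E i ω := ae_all_iff.mpr hEfae
      filter_upwards [hall] with ω hω
      exact Finset.prod_congr rfl (fun i _ => hω i)
    exact hmain.symm.trans hprodeq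
  · -- exchange of coordinates
    intro s t hs ht f hf hbd
    obtain ⟨C, hC⟩ := hbd
    have hC' : ∀ x, |f x| ≤ max C 0 := fun x => (hC x).trans (le_max_left _ _)
    have hfs_int : Integrable (fun ω : S → K => f (ω s)) μ :=
      integrable_of_bdd (hf.comp (measurable_pi_apply s)).aestronglyMeasurable
        (fun ω => hC' (ω s))
    have hft_int : Integrable (fun ω : S → K => f (ω t)) μ :=
      integrable_of_bdd (hf.comp (measurable_pi_apply t)).aestronglyMeasurable
        (fun ω => hC' (ω t))
    refine ae_eq_condExp_of_forall_setIntegral_eq (mA_le S₂) hft_int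
      (fun B _ _ => integrable_condExp.integrableOn) (fun B hB _ => ?_)
      stronglyMeasurable_condExp.aestronglyMeasurable
    rw [setIntegral_condExp (mA_le S₂) hfs_int hB]
    obtain ⟨B₀, hB₀, rfl⟩ := hB
    have hBmeas : MeasurableSet (restr (K := K) S₂ ⁻¹' B₀) :=
      mA_le S₂ _ ⟨B₀, hB₀, rfl⟩
    refine setIntegral_coord_swap hμ s t hf hBmeas ?_
    intro ω
    have hres : restr (K := K) S₂ (fun r => ω (Equiv.swap s t r)) = restr (K := K) S₂ ω := by
      funext v
      have hvs : (v : S) ≠ s := fun h => Set.disjoint_left.mp hdisj hs (h ▸ v.2)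
      have hvt : (v : S) ≠ t := fun h => Set.disjoint_left.mp hdisj ht (h ▸ v.2)
      simp only [restr]
      rw [Equiv.swap_apply_of_ne_of_ne hvs hvt]
    constructor
    · intro h
      rwa [Set.mem_preimage, ← hres]
    · intro h
      rwa [Set.mem_preimage, hres]
end

section
/- (Relative independence of edge colours.) Let K be a standard Borel space, S countably infinite partitioned into infinite S₁, S₂, and μ an exchangeable probability measure on K^{(S choose 2)}. Let 𝕋 be the σ-algebra generated by all maps π_s^{Z₁} for s ∈ S₁, where π_s^{Z₁} records the colours of all edges with at least one endpoint in {s} ∪ S₂ that meet {s} ∪ S₂. Then the edge random variables π_e for e ∈ (S₁ choose 2) are relatively independent over 𝕋: for any finite F ⊆ (S₁ choose 2) and bounded measurable functions f_e : K → ℝ, E_μ[∏_{e∈F} f_e ∘ π_e | 𝕋] = ∏_{e∈F} E_μ[f_e ∘ π_e | 𝕋] almost surely. -/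
open MeasureTheory

def edgeAct {S : Type*} [DecidableEq S] (g : Equiv.Perm S) {K : Type*}
    (ω : {e : Finset S // e.card = 2} → K) : {e : Finset S // e.card = 2} → K :=
  fun e => ω ⟨e.1.image g, by rw [Finset.card_image_of_injective _ g.injective, e.2]⟩


/-- The auxiliary projection `π_s^{Z₁}` recording the colours of all edges meeting `{s} ∪ S₂`. -/
def auxProj {S : Type*} [DecidableEq S] {K : Type*} (S₁ S₂ : Set S)
    (hdisj : Disjoint S₁ S₂) (s : S) (hs : s ∈ S₁)
    (ω : {e : Finset S // e.card = 2} → K) :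
    (S₂ → K) × ({a : Finset S // a.card = 2 ∧ (↑a : Set S) ⊆ S₂} → K) :=
  (fun t => ω ⟨{s, (t : S)}, Finset.card_pair (by
      intro h
      exact Set.disjoint_left.mp hdisj hs (by rw [h]; exact t.2))⟩,
   fun a => ω ⟨a.1, a.2.1⟩)

section Basic
variable {S : Type*} [DecidableEq S] {K : Type*} [MeasurableSpace K]

lemma measurable_edgeAct (g : Equiv.Perm S) :
    Measurable (edgeAct (K := K) g) :=
  measurable_pi_lambda _ (fun _ => measurable_pi_apply _)

/-- finite-support approximation of a permutation on a finite set -/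
lemma exists_finsupp_perm (g : Equiv.Perm S) (A : Finset S) :
    ∃ g' : Equiv.Perm S, {x | g' x ≠ x}.Finite ∧ ∀ a ∈ A, g' a = g a := by
  classical
  induction A using Finset.induction_on with
  | empty => exact ⟨1, by simp, by simp⟩
  | insert x A' hx ih =>
    obtain ⟨g', hg'fin, hg'⟩ := ih
    refine ⟨Equiv.swap (g' x) (g x) * g', ?_, ?_⟩
    · apply Set.Finite.subset (hg'fin.union ((Set.finite_singleton (g x)).insert (g' x)))
      intro y hy
      simp only [Set.mem_setOf_eq, Equiv.Perm.mul_apply] at hy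
      by_cases h : g' y = y
      · rw [h] at hy
        rcases eq_or_ne y (g' x) with rfl | h1
        · exact Or.inr (Set.mem_insert _ _)
        rcases eq_or_ne y (g x) with rfl | h2
        · exact Or.inr (Set.mem_insert_of_mem _ rfl)
        · exact absurd (Equiv.swap_apply_of_ne_of_ne h1 h2) hy
      · exact Or.inl h
    · intro a ha
      rcases Finset.mem_insert.mp ha with rfl | ha'
      · simp [Equiv.Perm.mul_apply]
      · have hax : a ≠ x := by rintro rfl; exact hx ha'
        rw [Equiv.Perm.mul_apply, hg' a ha']
        apply Equiv.swap_apply_of_ne_of_ne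
        · intro h; exact hax (g'.injective ((hg' a ha').trans h))
        · intro h; exact hax (g.injective h)

/-- full exchangeability from finite-support exchangeability -/
lemma map_edgeAct_eq {μ : Measure ({e : Finset S // e.card = 2} → K)}
    [IsProbabilityMeasure μ]
    (hμ : ∀ g : Equiv.Perm S, {x | g x ≠ x}.Finite → Measure.map (edgeAct g) μ = μ)
    (g : Equiv.Perm S) : Measure.map (edgeAct g) μ = μ := by
  classical
  haveI : IsProbabilityMeasure (Measure.map (edgeAct (K := K) g) μ) :=
    Measure.isProbabilityMeasure_map (measurable_edgeAct g).aemeasurable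
  refine MeasureTheory.ext_of_generate_finite _ generateFrom_measurableCylinders.symm
    isPiSystem_measurableCylinders (fun t ht => ?_) (by simp)
  obtain ⟨s, St, hSt, rfl⟩ := (mem_measurableCylinders t).mp ht
  obtain ⟨g', hg'fin, hg'⟩ := exists_finsupp_perm g (s.biUnion (fun e => e.1))
  have hpre : edgeAct (K := K) g ⁻¹' cylinder s St = edgeAct (K := K) g' ⁻¹' cylinder s St := by
    ext ω
    simp only [Set.mem_preimage, mem_cylinder]
    have : ∀ (i : s), (Finset.restrict s (edgeAct g ω)) i
        = (Finset.restrict s (edgeAct g' ω)) i := by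
      rintro ⟨i, hi⟩
      have him : i.1.image g = i.1.image g' := by
        apply Finset.image_congr
        intro x hxi
        exact (hg' x (Finset.mem_biUnion.mpr ⟨i, hi, hxi⟩)).symm
      simp only [Finset.restrict, edgeAct]
      congr 1
      exact Subtype.ext him
    rw [funext this]
  rw [Measure.map_apply (measurable_edgeAct g) (hSt.cylinder),
    hpre, ← Measure.map_apply (measurable_edgeAct g') (hSt.cylinder), hμ g' hg'fin]

end Basic

section L2
variable {Ω : Type*}

lemma integrable_of_ae_bdd [MeasurableSpace Ω] {μ : Measure Ω} [IsProbabilityMeasure μ]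
    {φ : Ω → ℝ} {C : ℝ} (hmeas : AEStronglyMeasurable φ μ)
    (h : ∀ᵐ ω ∂μ, |φ ω| ≤ C) : Integrable φ μ :=
  Integrable.mono' (integrable_const C) hmeas (h.mono fun ω hω => by rwa [Real.norm_eq_abs])

lemma condexp_energy {m : MeasurableSpace Ω} [m0 : MeasurableSpace Ω] (hm : m ≤ m0)
    {μ : Measure Ω} [IsProbabilityMeasure μ] {Y : Ω → ℝ} {C : ℝ}
    (hY : AEStronglyMeasurable Y μ) (hC0 : 0 ≤ C) (hbd : ∀ᵐ ω ∂μ, |Y ω| ≤ C) :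
    ∫ ω, (Y ω - (μ[Y|m]) ω) * (Y ω - (μ[Y|m]) ω) ∂μ
      = ∫ ω, Y ω * Y ω ∂μ - ∫ ω, (μ[Y|m]) ω * (μ[Y|m]) ω ∂μ := by
  haveI : SigmaFinite (μ.trim hm) := inferInstance
  set W := μ[Y|m] with hW
  have hWsm : AEStronglyMeasurable W μ :=
    (stronglyMeasurable_condExp.mono hm).aestronglyMeasurable
  have hWbd : ∀ᵐ ω ∂μ, |W ω| ≤ C := by
    have := ae_bdd_condExp_of_ae_bdd (μ := μ) (m := m) (R := C.toNNReal) (f := Y)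
      (by rwa [Real.coe_toNNReal C hC0])
    rwa [Real.coe_toNNReal C hC0] at this
  have hYint : Integrable Y μ := integrable_of_ae_bdd hY hbd
  have habs : ∀ (u v : Ω → ℝ), (∀ᵐ ω ∂μ, |u ω| ≤ C) → (∀ᵐ ω ∂μ, |v ω| ≤ C) →
      ∀ᵐ ω ∂μ, |u ω * v ω| ≤ C * C := by
    intro u v hu hv
    filter_upwards [hu, hv] with ω h1 h2
    rw [abs_mul]
    exact mul_le_mul h1 h2 (abs_nonneg _) hC0
  have hWY : Integrable (fun ω => W ω * Y ω) μ :=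
    integrable_of_ae_bdd (hWsm.mul hY) (habs _ _ hWbd hbd)
  have hYY : Integrable (fun ω => Y ω * Y ω) μ :=
    integrable_of_ae_bdd (hY.mul hY) (habs _ _ hbd hbd)
  have hWW : Integrable (fun ω => W ω * W ω) μ :=
    integrable_of_ae_bdd (hWsm.mul hWsm) (habs _ _ hWbd hWbd)
  -- key: ∫ W·Y = ∫ W·W
  have hkey : ∫ ω, W ω * Y ω ∂μ = ∫ ω, W ω * W ω ∂μ := by
    have h1 : μ[fun ω => W ω * Y ω|m] =ᵐ[μ] fun ω => W ω * (μ[Y|m]) ω :=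
      condExp_mul_of_stronglyMeasurable_left (μ := μ) (f := W) (g := Y)
        stronglyMeasurable_condExp hWY hYint
    calc ∫ ω, W ω * Y ω ∂μ = ∫ ω, (μ[fun ω => W ω * Y ω|m]) ω ∂μ :=
          (integral_condExp hm).symm
      _ = ∫ ω, W ω * W ω ∂μ := integral_congr_ae h1
  have expand : ∀ ω, (Y ω - W ω) * (Y ω - W ω)
      = Y ω * Y ω - (2 * (W ω * Y ω) - W ω * W ω) := by intro ω; ring
  have h2 : Integrable (fun ω => 2 * (W ω * Y ω) - W ω * W ω) μ :=
    (hWY.const_mul 2).sub hWW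
  rw [integral_congr_ae (Filter.Eventually.of_forall expand), integral_sub hYY h2,
    integral_sub (hWY.const_mul 2) hWW, integral_const_mul, hkey]
  ring

lemma condexp_energy_le {m : MeasurableSpace Ω} [m0 : MeasurableSpace Ω] (hm : m ≤ m0)
    {μ : Measure Ω} [IsProbabilityMeasure μ] {Y : Ω → ℝ} {C : ℝ}
    (hY : AEStronglyMeasurable Y μ) (hC0 : 0 ≤ C) (hbd : ∀ᵐ ω ∂μ, |Y ω| ≤ C) :
    ∫ ω, (μ[Y|m]) ω * (μ[Y|m]) ω ∂μ ≤ ∫ ω, Y ω * Y ω ∂μ := by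
  have h := condexp_energy hm hY hC0 hbd
  have h0 : (0:ℝ) ≤ ∫ ω, (Y ω - (μ[Y|m]) ω) * (Y ω - (μ[Y|m]) ω) ∂μ :=
    integral_nonneg (fun ω => mul_self_nonneg _)
  linarith

lemma condexp_ae_eq_of_energy_ge {m : MeasurableSpace Ω} [m0 : MeasurableSpace Ω] (hm : m ≤ m0)
    {μ : Measure Ω} [IsProbabilityMeasure μ] {Y : Ω → ℝ} {C : ℝ}
    (hY : AEStronglyMeasurable Y μ) (hC0 : 0 ≤ C) (hbd : ∀ᵐ ω ∂μ, |Y ω| ≤ C)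
    (hge : ∫ ω, Y ω * Y ω ∂μ ≤ ∫ ω, (μ[Y|m]) ω * (μ[Y|m]) ω ∂μ) :
    Y =ᵐ[μ] μ[Y|m] := by
  haveI : SigmaFinite (μ.trim hm) := inferInstance
  set W := μ[Y|m] with hWdef
  have hWsm : AEStronglyMeasurable W μ :=
    (stronglyMeasurable_condExp.mono hm).aestronglyMeasurable
  have hWbd : ∀ᵐ ω ∂μ, |W ω| ≤ C := by
    have := ae_bdd_condExp_of_ae_bdd (μ := μ) (m := m) (R := C.toNNReal) (f := Y)
      (by rwa [Real.coe_toNNReal C hC0])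
    rwa [Real.coe_toNNReal C hC0] at this
  have hint : Integrable (fun ω => (Y ω - W ω) * (Y ω - W ω)) μ := by
    refine integrable_of_ae_bdd (C := (C+C)*(C+C)) ((hY.sub hWsm).mul (hY.sub hWsm)) ?_
    filter_upwards [hbd, hWbd] with ω h1 h2
    rw [abs_mul]
    have h3 : |Y ω - W ω| ≤ C + C := (abs_sub _ _).trans (add_le_add h1 h2)
    exact mul_le_mul h3 h3 (abs_nonneg _) (by linarith)
  have h := condexp_energy hm hY hC0 hbd
  have hzero : ∫ ω, (Y ω - W ω) * (Y ω - W ω) ∂μ = 0 := le_antisymm (by rw [h]; linarith)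
    (integral_nonneg (fun ω => mul_self_nonneg _))
  have := (integral_eq_zero_iff_of_nonneg_ae
    (Filter.Eventually.of_forall (fun ω => mul_self_nonneg (Y ω - W ω))) hint).mp hzero
  filter_upwards [this] with ω hω
  have : Y ω - W ω = 0 := mul_self_eq_zero.mp hω
  linarith

lemma condexp_comp_preserving {m : MeasurableSpace Ω} [m0 : MeasurableSpace Ω] (hm : m ≤ m0)
    {μ : Measure Ω} [IsProbabilityMeasure μ] {T : Ω → Ω} (hT : Measurable T)
    (hTμ : Measure.map T μ = μ) {X : Ω → ℝ} (hXint : Integrable X μ) :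
    (fun ω => (μ[X|m]) (T ω)) =ᵐ[μ] μ[fun ω => X (T ω) | MeasurableSpace.comap T m] := by
  have hmT : MeasurableSpace.comap T m ≤ m0 :=
    (MeasurableSpace.comap_mono hm).trans (measurable_iff_comap_le.mp hT)
  haveI : SigmaFinite (μ.trim hm) := inferInstance
  haveI : SigmaFinite (μ.trim hmT) := inferInstance
  have hXmap : AEStronglyMeasurable X (Measure.map T μ) := by rw [hTμ]; exact hXint.1
  have hXTint : Integrable (fun ω => X (T ω)) μ :=
    (integrable_map_measure hXmap hT.aemeasurable).mp (by rwa [hTμ])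
  have hcmap : AEStronglyMeasurable (μ[X|m]) (Measure.map T μ) := by
    rw [hTμ]; exact (stronglyMeasurable_condExp.mono hm).aestronglyMeasurable
  have hgint : Integrable (fun ω => (μ[X|m]) (T ω)) μ := by
    have : Integrable (μ[X|m]) (Measure.map T μ) := by rw [hTμ]; exact integrable_condExp
    exact (integrable_map_measure hcmap hT.aemeasurable).mp this
  refine ae_eq_condExp_of_forall_setIntegral_eq hmT hXTint
    (fun s _ _ => hgint.integrableOn) (fun s hs _ => ?_) ?_
  · obtain ⟨A, hA, rfl⟩ := hs
    have hA0 : MeasurableSet A := hm _ hA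
    calc ∫ x in T ⁻¹' A, (μ[X|m]) (T x) ∂μ
        = ∫ y in A, (μ[X|m]) y ∂(Measure.map T μ) :=
          (setIntegral_map hA0 hcmap hT.aemeasurable).symm
      _ = ∫ y in A, (μ[X|m]) y ∂μ := by rw [hTμ]
      _ = ∫ y in A, X y ∂μ := setIntegral_condExp hm hXint hA
      _ = ∫ y in A, X y ∂(Measure.map T μ) := by rw [hTμ]
      _ = ∫ x in T ⁻¹' A, X (T x) ∂μ := setIntegral_map hA0 hXmap hT.aemeasurable
  · exact StronglyMeasurable.aestronglyMeasurable
      (stronglyMeasurable_condExp.comp_measurable (measurable_iff_comap_le.mpr le_rfl))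
end L2

lemma equiv_of_countable_infinite {S : Type*} [Countable S] {A B : Set S}
    (hA : A.Infinite) (hB : B.Infinite) : Nonempty (A ≃ B) := by
  haveI := hA.to_subtype
  haveI := hB.to_subtype
  obtain ⟨dA⟩ := nonempty_denumerable A
  obtain ⟨dB⟩ := nonempty_denumerable B
  exact ⟨(Denumerable.eqv A).trans (Denumerable.eqv B).symm⟩

lemma exists_perm_glue {S : Type*} (E P2 P3 Q2 Q3 : Set S)
    (hPcov : ∀ x, x ∈ E ∨ x ∈ P2 ∨ x ∈ P3) (hQcov : ∀ x, x ∈ E ∨ x ∈ Q2 ∨ x ∈ Q3)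
    (hEP2 : ∀ x ∈ E, x ∉ P2) (hEP3 : ∀ x ∈ E, x ∉ P3) (hP23 : ∀ x ∈ P2, x ∉ P3)
    (hEQ2 : ∀ x ∈ E, x ∉ Q2) (hEQ3 : ∀ x ∈ E, x ∉ Q3) (hQ23 : ∀ x ∈ Q2, x ∉ Q3)
    (e2 : P2 ≃ Q2) (e3 : P3 ≃ Q3) :
    ∃ g : Equiv.Perm S, (∀ x ∈ E, g x = x) ∧ (∀ x ∈ P2, g x ∈ Q2) ∧ (∀ x ∈ P3, g x ∈ Q3) := by
  classical
  set F : S → S := fun x =>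
    if hE : x ∈ E then x
    else if h2 : x ∈ P2 then (e2 ⟨x, h2⟩ : S)
    else (e3 ⟨x, ((hPcov x).resolve_left hE).resolve_left h2⟩ : S) with hFdef
  have hFE : ∀ x, x ∈ E → F x = x := fun x h => by simp [hFdef, h]
  have hFP2 : ∀ x (h2 : x ∈ P2), F x = (e2 ⟨x, h2⟩ : S) := by
    intro x h2
    have hE : x ∉ E := fun hE => hEP2 x hE h2
    simp [hFdef, hE, h2]
  have hFP3 : ∀ x (h3 : x ∈ P3), F x = (e3 ⟨x, h3⟩ : S) := by
    intro x h3
    have hE : x ∉ E := fun hE => hEP3 x hE h3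
    have h2 : x ∉ P2 := fun h2 => hP23 x h2 h3
    simp [hFdef, hE, h2]
  have hmem2 : ∀ x, x ∈ P2 → F x ∈ Q2 := fun x h => by rw [hFP2 x h]; exact (e2 ⟨x, h⟩).2
  have hmem3 : ∀ x, x ∈ P3 → F x ∈ Q3 := fun x h => by rw [hFP3 x h]; exact (e3 ⟨x, h⟩).2
  have hinj : Function.Injective F := by
    intro x y hxy
    rcases hPcov x with hx | hx | hx <;> rcases hPcov y with hy | hy | hy
    · rw [hFE x hx, hFE y hy] at hxy; exact hxy
    · rw [hFE x hx] at hxy; exact absurd (hxy ▸ hmem2 y hy) (hEQ2 x hx)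
    · rw [hFE x hx] at hxy; exact absurd (hxy ▸ hmem3 y hy) (hEQ3 x hx)
    · rw [hFE y hy] at hxy; exact absurd (hxy ▸ hmem2 x hx) (hEQ2 y hy)
    · rw [hFP2 x hx, hFP2 y hy] at hxy
      have := e2.injective (Subtype.coe_injective hxy)
      exact congrArg Subtype.val this
    · exact absurd (hxy ▸ hmem3 y hy) (hQ23 _ (hmem2 x hx))
    · rw [hFE y hy] at hxy; exact absurd (hxy ▸ hmem3 x hx) (hEQ3 y hy)
    · exact absurd (hxy ▸ hmem2 y hy) (fun h => hQ23 _ h (hmem3 x hx))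
    · rw [hFP3 x hx, hFP3 y hy] at hxy
      have := e3.injective (Subtype.coe_injective hxy)
      exact congrArg Subtype.val this
  have hsurj : Function.Surjective F := by
    intro y
    rcases hQcov y with hy | hy | hy
    · exact ⟨y, hFE y hy⟩
    · refine ⟨(e2.symm ⟨y, hy⟩ : S), ?_⟩
      rw [hFP2 _ (e2.symm ⟨y, hy⟩).2]
      rw [Subtype.coe_eta, Equiv.apply_symm_apply]
    · refine ⟨(e3.symm ⟨y, hy⟩ : S), ?_⟩
      rw [hFP3 _ (e3.symm ⟨y, hy⟩).2]
      rw [Subtype.coe_eta, Equiv.apply_symm_apply]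
  exact ⟨Equiv.ofBijective F ⟨hinj, hsurj⟩, hFE, hmem2, hmem3⟩

lemma exists_good_perm {S : Type*} [Countable S]
    (S₁ S₂ : Set S) (hdisj : Disjoint S₁ S₂) (hunion : S₁ ∪ S₂ = Set.univ)
    (h₁ : S₁.Infinite) (h₂ : S₂.Infinite)
    (e₀ : Finset S) (h₀ : (↑e₀ : Set S) ⊆ S₁) (V : Finset S)
    (hV : (↑V : Set S) ⊆ S₁) (hVe : ∀ x ∈ V, x ∉ e₀) :
    ∃ g : Equiv.Perm S, (∀ x ∈ e₀, g x = x) ∧ (∀ x ∈ S₂, g x ∈ S₂) ∧ (∀ x ∈ V, g x ∈ S₂) := by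
  classical
  have hS1c : ∀ x : S, x ∉ S₂ → x ∈ S₁ := by
    intro x hx
    have h := Set.eq_univ_iff_forall.mp (hunion ▸ rfl : S₁ ∪ S₂ = Set.univ) x
    rcases (Set.mem_union _ _ _).mp h with h1 | h2
    · exact h1
    · exact absurd h2 hx
  have hd : ∀ x ∈ S₁, x ∉ S₂ := fun x hx => Set.disjoint_left.mp hdisj hx
  set E : Set S := ↑e₀
  set P2 : Set S := ↑V ∪ S₂
  set P3 : Set S := S₁ \ (↑e₀ ∪ ↑V)
  set Q2 : Set S := S₂
  set Q3 : Set S := S₁ \ ↑e₀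
  have hP2inf : P2.Infinite := h₂.mono Set.subset_union_right
  have hP3inf : P3.Infinite := h₁.diff (e₀.finite_toSet.union V.finite_toSet)
  have hQ3inf : Q3.Infinite := h₁.diff e₀.finite_toSet
  obtain ⟨eq2⟩ := equiv_of_countable_infinite hP2inf h₂
  obtain ⟨eq3⟩ := equiv_of_countable_infinite hP3inf hQ3inf
  obtain ⟨g, hg1, hg2, hg3⟩ := exists_perm_glue E P2 P3 Q2 Q3
    (by
      intro x
      by_cases hx2 : x ∈ S₂
      · exact Or.inr (Or.inl (Or.inr hx2))
      have hx1 := hS1c x hx2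
      by_cases hxe : x ∈ e₀
      · exact Or.inl (by exact_mod_cast hxe)
      by_cases hxV : x ∈ V
      · exact Or.inr (Or.inl (Or.inl (by exact_mod_cast hxV)))
      · refine Or.inr (Or.inr ⟨hx1, ?_⟩)
        rw [Set.mem_union]
        push_neg
        exact ⟨by exact_mod_cast hxe, by exact_mod_cast hxV⟩)
    (by
      intro x
      by_cases hx2 : x ∈ S₂
      · exact Or.inr (Or.inl hx2)
      have hx1 := hS1c x hx2
      by_cases hxe : x ∈ e₀
      · exact Or.inl (by exact_mod_cast hxe)
      · exact Or.inr (Or.inr ⟨hx1, by exact_mod_cast hxe⟩))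
    (by
      intro x hx
      rw [Set.mem_union]
      push_neg
      have hx' : x ∈ e₀ := by exact_mod_cast hx
      exact ⟨fun h => hVe x (by exact_mod_cast h) hx', hd x (h₀ hx)⟩)
    (fun x hx h3 => h3.2 (Or.inl hx))
    (by
      rintro x (hxV | hx2) h3
      · exact h3.2 (Or.inr hxV)
      · exact hd x h3.1 hx2)
    (fun x hx => hd x (h₀ hx))
    (fun x hx h3 => h3.2 hx)
    (fun x hx h3 => hd x h3.1 hx)
    eq2 eq3
  refine ⟨g, ?_, ?_, ?_⟩
  · intro x hx; exact hg1 x (by exact_mod_cast hx)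
  · intro x hx; exact hg2 x (Or.inr hx)
  · intro x hx; exact hg2 x (Or.inl (by exact_mod_cast hx))

lemma ae_bdd_condexp_real {Ω : Type*} {m : MeasurableSpace Ω} [m0 : MeasurableSpace Ω]
    {μ : Measure Ω} [IsProbabilityMeasure μ] {X : Ω → ℝ} {C : ℝ}
    (hC0 : 0 ≤ C) (hbd : ∀ᵐ ω ∂μ, |X ω| ≤ C) : ∀ᵐ ω ∂μ, |(μ[X|m]) ω| ≤ C := by
  have := ae_bdd_condExp_of_ae_bdd (μ := μ) (m := m) (R := C.toNNReal) (f := X)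
    (by rwa [Real.coe_toNNReal C hC0])
  rwa [Real.coe_toNNReal C hC0] at this

lemma measurable_pi_lambda' {α : Type*} {δ : Type*} {π : δ → Type*}
    (m : MeasurableSpace α) [∀ a, MeasurableSpace (π a)] (f : α → ∀ a, π a)
    (hf : ∀ a, Measurable[m] fun c => f c a) : Measurable[m] f :=
  measurable_pi_lambda f hf

section Ctx
variable {K : Type*} [MeasurableSpace K] {S : Type*} [DecidableEq S] [Countable S]

lemma measurable_auxProj (S₁ S₂ : Set S) (hdisj : Disjoint S₁ S₂) (s : S) (hs : s ∈ S₁) :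
    Measurable (auxProj (K := K) S₁ S₂ hdisj s hs) :=
  Measurable.prod (measurable_pi_lambda _ fun _ => measurable_pi_apply _)
    (measurable_pi_lambda _ fun _ => measurable_pi_apply _)

lemma measurable_eval_of_meets (S₁ S₂ : Set S) (hdisj : Disjoint S₁ S₂)
    (hunion : S₁ ∪ S₂ = Set.univ) (h₁ : S₁.Infinite)
    (𝕋 : MeasurableSpace ({e : Finset S // e.card = 2} → K))
    (h𝕋 : 𝕋 = ⨆ (s : S) (hs : s ∈ S₁),
      MeasurableSpace.comap (auxProj S₁ S₂ hdisj s hs) inferInstance)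
    (e' : {e : Finset S // e.card = 2}) (hmeet : ∃ t ∈ e'.1, t ∈ S₂) :
    Measurable[𝕋] (fun ω => ω e') := by
  classical
  have hS1c : ∀ x : S, x ∉ S₂ → x ∈ S₁ := by
    intro x hx
    rcases (Set.mem_union _ _ _).mp (Set.eq_univ_iff_forall.mp hunion x) with h | h
    · exact h
    · exact absurd h hx
  have hproj : ∀ (s : S) (hs : s ∈ S₁),
      Measurable[𝕋] (auxProj (K := K) S₁ S₂ hdisj s hs) := by
    intro s hs
    apply measurable_iff_comap_le.mpr
    rw [h𝕋]
    exact le_iSup_of_le s (le_iSup_of_le hs le_rfl)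
  obtain ⟨t, ht, ht2⟩ := hmeet
  obtain ⟨x, y, hxy, hxy2⟩ := Finset.card_eq_two.mp e'.2
  have hpair : ∃ u, u ≠ t ∧ e'.1 = {t, u} := by
    have htxy : t = x ∨ t = y := by
      have := hxy2 ▸ ht
      rcases Finset.mem_insert.mp this with h | h
      · exact Or.inl h
      · exact Or.inr (Finset.mem_singleton.mp h)
    rcases htxy with rfl | rfl
    · exact ⟨y, fun h => hxy h.symm, hxy2⟩
    · exact ⟨x, fun h => hxy h, by rw [hxy2, Finset.pair_comm]⟩
  obtain ⟨u, hut, heq⟩ := hpair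
  by_cases hu2 : u ∈ S₂
  · -- both endpoints in S₂
    obtain ⟨s₀, hs₀⟩ := h₁.nonempty
    have hsub : (↑e'.1 : Set S) ⊆ S₂ := by
      intro z hz
      have hz' : z ∈ e'.1 := hz
      rw [heq] at hz'
      rcases Finset.mem_insert.mp hz' with rfl | h
      · exact ht2
      · rw [Finset.mem_singleton.mp h]; exact hu2
    have key : (fun ω : {e : Finset S // e.card = 2} → K => ω e')
        = fun ω => (auxProj S₁ S₂ hdisj s₀ hs₀ ω).2 ⟨e'.1, e'.2, hsub⟩ := rfl
    rw [key]
    exact ((measurable_pi_apply _).comp measurable_snd).comp (hproj s₀ hs₀)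
  · -- u ∈ S₁, t ∈ S₂
    have hu1 : u ∈ S₁ := hS1c u hu2
    have key : (fun ω : {e : Finset S // e.card = 2} → K => ω e')
        = fun ω => (auxProj S₁ S₂ hdisj u hu1 ω).1 ⟨t, ht2⟩ := by
      funext ω
      show ω e' = ω ⟨{u, t}, _⟩
      congr 1
      exact Subtype.ext (by rw [heq, Finset.pair_comm])
    rw [key]
    exact ((measurable_pi_apply _).comp measurable_fst).comp (hproj u hu1)

lemma condexp_edge_indep
    (S₁ S₂ : Set S) (hdisj : Disjoint S₁ S₂) (hunion : S₁ ∪ S₂ = Set.univ)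
    (h₁ : S₁.Infinite) (h₂ : S₂.Infinite)
    (μ : Measure ({e : Finset S // e.card = 2} → K)) [IsProbabilityMeasure μ]
    (hμ : ∀ g : Equiv.Perm S, {x | g x ≠ x}.Finite → Measure.map (edgeAct g) μ = μ)
    (𝕋 : MeasurableSpace ({e : Finset S // e.card = 2} → K))
    (h𝕋 : 𝕋 = ⨆ (s : S) (hs : s ∈ S₁),
      MeasurableSpace.comap (auxProj S₁ S₂ hdisj s hs) inferInstance)
    (e₀ : {e : Finset S // e.card = 2}) (h₀ : (↑e₀.1 : Set S) ⊆ S₁)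
    {n : ℕ} (e' : Fin n → {e : Finset S // e.card = 2})
    (he' : ∀ i, (↑(e' i).1 : Set S) ⊆ S₁) (hne : ∀ i, e' i ≠ e₀)
    {f : K → ℝ} (hf : Measurable f) {C : ℝ} (hC0 : 0 ≤ C) (hC : ∀ x, |f x| ≤ C) :
    μ[(fun ω => f (ω e₀)) |
        𝕋 ⊔ ⨆ i, MeasurableSpace.comap (fun ω => ω (e' i)) inferInstance]
      =ᵐ[μ] μ[(fun ω => f (ω e₀)) | 𝕋] := by
  classical
  have h𝕋0 : 𝕋 ≤ (MeasurableSpace.pi : MeasurableSpace ({e : Finset S // e.card = 2} → K)) := by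
    rw [h𝕋]
    apply iSup_le; intro s; apply iSup_le; intro hs
    exact measurable_iff_comap_le.mp (measurable_auxProj S₁ S₂ hdisj s hs)
  set 𝒜 := 𝕋 ⊔ ⨆ i, MeasurableSpace.comap
      (fun ω : {e : Finset S // e.card = 2} → K => ω (e' i)) inferInstance with h𝒜def
  letI : MeasurableSpace ({e : Finset S // e.card = 2} → K) := MeasurableSpace.pi
  have h𝒜0 : 𝒜 ≤ (MeasurableSpace.pi : MeasurableSpace ({e : Finset S // e.card = 2} → K)) :=
    sup_le h𝕋0 (iSup_le fun i => measurable_iff_comap_le.mp (measurable_pi_apply _))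
  have h𝕋𝒜 : 𝕋 ≤ 𝒜 := le_sup_left
  -- the permutation
  set V : Finset S := (Finset.univ.biUnion fun i => (e' i).1) \ e₀.1 with hVdef
  have hVS₁ : (↑V : Set S) ⊆ S₁ := by
    intro x hx
    have hx' : x ∈ V := hx
    rw [hVdef, Finset.mem_sdiff] at hx'
    obtain ⟨i, _, hxi⟩ := Finset.mem_biUnion.mp hx'.1
    exact he' i hxi
  have hVe : ∀ x ∈ V, x ∉ e₀.1 := fun x hx => (Finset.mem_sdiff.mp hx).2
  obtain ⟨g, hg0, hgS2, hgV⟩ := exists_good_perm S₁ S₂ hdisj hunion h₁ h₂ e₀.1 h₀ V hVS₁ hVe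
  set T := edgeAct (K := K) g with hTdef
  have hT := measurable_edgeAct (K := K) g
  have hTμ := map_edgeAct_eq hμ g
  set X : ({e : Finset S // e.card = 2} → K) → ℝ := fun ω => f (ω e₀) with hXdef
  have hXm : Measurable[MeasurableSpace.pi] X := hf.comp (measurable_pi_apply e₀)
  have hXbd : ∀ᵐ ω ∂μ, |X ω| ≤ C := Filter.Eventually.of_forall fun ω => hC _
  have hXint : Integrable X μ := integrable_of_ae_bdd hXm.aestronglyMeasurable hXbd
  have hXT : (fun ω => X (T ω)) = X := by
    funext ω
    show f (ω ⟨e₀.1.image g, _⟩) = f (ω e₀)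
    congr 1
    congr 1
    exact Subtype.ext (by
      show e₀.1.image g = e₀.1
      rw [Finset.image_congr (g := id) (fun x hx => hg0 x hx), Finset.image_id])
  -- the pulled-back σ-algebra lands inside 𝕋
  have hsub : ∀ (c : {e : Finset S // e.card = 2}), (∃ t ∈ c.1, t ∈ S₂) →
      Measurable[𝕋] (fun ω : {e : Finset S // e.card = 2} → K => ω c) :=
    fun c hc => measurable_eval_of_meets S₁ S₂ hdisj hunion h₁ 𝕋 h𝕋 c hc
  have hTaux : ∀ (s : S) (hs : s ∈ S₁),
      Measurable[𝕋] (auxProj (K := K) S₁ S₂ hdisj s hs ∘ T) := by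
    intro s hs
    refine Measurable.prod ?_ ?_
    · refine measurable_pi_lambda' 𝕋 _ fun t => ?_
      exact hsub ⟨({s, (t : S)} : Finset S).image g, by
          rw [Finset.card_image_of_injective _ g.injective]
          exact Finset.card_pair (fun h => Set.disjoint_left.mp hdisj hs (by rw [h]; exact t.2))⟩
        ⟨g t, Finset.mem_image_of_mem g (Finset.mem_insert_of_mem (Finset.mem_singleton_self _)),
          hgS2 _ t.2⟩
    · refine measurable_pi_lambda' 𝕋 _ fun a => ?_
      have hane : a.1.Nonempty := Finset.card_pos.mp (by rw [a.2.1]; norm_num)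
      obtain ⟨z, hz⟩ := hane
      exact hsub ⟨a.1.image g, by
          rw [Finset.card_image_of_injective _ g.injective]; exact a.2.1⟩
        ⟨g z, Finset.mem_image_of_mem g hz, hgS2 _ (a.2.2 hz)⟩
  have hcomap : MeasurableSpace.comap T 𝒜 ≤ 𝕋 := by
    rw [h𝒜def, MeasurableSpace.comap_sup]
    apply sup_le
    · have heq : MeasurableSpace.comap T 𝕋 = ⨆ (s : S) (hs : s ∈ S₁),
          MeasurableSpace.comap (auxProj (K := K) S₁ S₂ hdisj s hs ∘ T) inferInstance := by
        conv_lhs => rw [h𝕋]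
        simp_rw [MeasurableSpace.comap_iSup, MeasurableSpace.comap_comp]
      rw [heq]
      apply iSup_le; intro s; apply iSup_le; intro hs
      exact measurable_iff_comap_le.mp (hTaux s hs)
    · have heq : MeasurableSpace.comap T (⨆ i, MeasurableSpace.comap
          (fun ω : {e : Finset S // e.card = 2} → K => ω (e' i)) inferInstance)
          = ⨆ i, MeasurableSpace.comap
            ((fun ω : {e : Finset S // e.card = 2} → K => ω (e' i)) ∘ T) inferInstance := by
        simp_rw [MeasurableSpace.comap_iSup, MeasurableSpace.comap_comp]
      rw [heq]
      apply iSup_le; intro i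
      refine measurable_iff_comap_le.mp ?_
      have hc : ∃ c ∈ (e' i).1, c ∉ e₀.1 := by
        by_contra hcon
        push_neg at hcon
        have hsubset : (e' i).1 ⊆ e₀.1 := fun c hc => hcon c hc
        have : (e' i).1 = e₀.1 :=
          Finset.eq_of_subset_of_card_le hsubset (by rw [(e' i).2, e₀.2])
        exact hne i (Subtype.ext this)
      obtain ⟨c, hc1, hc2⟩ := hc
      have hcV : c ∈ V := by
        rw [hVdef, Finset.mem_sdiff]
        exact ⟨Finset.mem_biUnion.mpr ⟨i, Finset.mem_univ i, hc1⟩, hc2⟩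
      exact hsub ⟨(e' i).1.image g, by
          rw [Finset.card_image_of_injective _ g.injective]; exact (e' i).2⟩
        ⟨g c, Finset.mem_image_of_mem g hc1, hgV c hcV⟩
  -- energy argument
  set m' := MeasurableSpace.comap T 𝒜 with hm'def
  letI : MeasurableSpace ({e : Finset S // e.card = 2} → K) := MeasurableSpace.pi
  have hm'0 : m' ≤ (MeasurableSpace.pi : MeasurableSpace ({e : Finset S // e.card = 2} → K)) :=
    hcomap.trans h𝕋0
  set Y := μ[X|𝒜] with hYdef
  set Z := μ[X|𝕋] with hZdef
  have hcomp : (fun ω => Y (T ω)) =ᵐ[μ] μ[X|m'] := by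
    have h := condexp_comp_preserving h𝒜0 hT hTμ hXint
    rwa [hXT] at h
  have hYsm : AEStronglyMeasurable Y μ :=
    (stronglyMeasurable_condExp.mono h𝒜0).aestronglyMeasurable
  have hYbd : ∀ᵐ ω ∂μ, |Y ω| ≤ C := ae_bdd_condexp_real hC0 hXbd
  have hZsm : AEStronglyMeasurable Z μ :=
    (stronglyMeasurable_condExp.mono h𝕋0).aestronglyMeasurable
  have hZbd : ∀ᵐ ω ∂μ, |Z ω| ≤ C := ae_bdd_condexp_real hC0 hXbd
  have hint_eq : ∫ ω, Y (T ω) * Y (T ω) ∂μ = ∫ ω, Y ω * Y ω ∂μ := by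
    have hsm : AEStronglyMeasurable (fun ω => Y ω * Y ω) (Measure.map T μ) := by
      rw [hTμ]; exact hYsm.mul hYsm
    calc ∫ ω, Y (T ω) * Y (T ω) ∂μ
        = ∫ y, Y y * Y y ∂(Measure.map T μ) := (integral_map hT.aemeasurable hsm).symm
      _ = ∫ ω, Y ω * Y ω ∂μ := by rw [hTμ]
  have h1 : ∫ ω, Y (T ω) * Y (T ω) ∂μ = ∫ ω, (μ[X|m']) ω * (μ[X|m']) ω ∂μ :=
    integral_congr_ae (hcomp.mul hcomp)
  have h2 : μ[X|m'] =ᵐ[μ] μ[Z|m'] := (condExp_condExp_of_le hcomap h𝕋0).symm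
  have h3 : ∫ ω, (μ[Z|m']) ω * (μ[Z|m']) ω ∂μ ≤ ∫ ω, Z ω * Z ω ∂μ :=
    condexp_energy_le hm'0 hZsm hC0 hZbd
  have h4 : Z =ᵐ[μ] μ[Y|𝕋] := (condExp_condExp_of_le h𝕋𝒜 h𝒜0).symm
  have h5 : ∫ ω, Z ω * Z ω ∂μ = ∫ ω, (μ[Y|𝕋]) ω * (μ[Y|𝕋]) ω ∂μ :=
    integral_congr_ae (h4.mul h4)
  have hge : ∫ ω, Y ω * Y ω ∂μ ≤ ∫ ω, (μ[Y|𝕋]) ω * (μ[Y|𝕋]) ω ∂μ := by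
    have e1 : ∫ ω, Y ω * Y ω ∂μ = ∫ ω, (μ[Z|m']) ω * (μ[Z|m']) ω ∂μ := by
      rw [← hint_eq, h1]
      exact integral_congr_ae (h2.mul h2)
    rw [e1, ← h5]
    exact h3
  have hfin : Y =ᵐ[μ] μ[Y|𝕋] := condexp_ae_eq_of_energy_ge h𝕋0 hYsm hC0 hYbd hge
  exact hfin.trans h4.symm
end Ctx

/-- relative independence of edge colours: for an exchangeable random
`K`-coloured graph `μ` on `S = S₁ ∪ S₂` (both infinite), the edge variables `π_e`,
`e ∈ (S₁ choose 2)`, are relatively independent over the σ-algebra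
`𝕋 = ⋁_{s∈S₁} σ(π_s^{Z₁})` generated by the auxiliary projections. -/
theorem edge_colours_relatively_independent
    {K : Type*} [MeasurableSpace K]
    {S : Type*} [DecidableEq S] [Countable S]
    (S₁ S₂ : Set S) (hdisj : Disjoint S₁ S₂) (hunion : S₁ ∪ S₂ = Set.univ)
    (h₁ : S₁.Infinite) (h₂ : S₂.Infinite)
    (μ : Measure ({e : Finset S // e.card = 2} → K)) [IsProbabilityMeasure μ]
    (hμ : ∀ g : Equiv.Perm S, {x | g x ≠ x}.Finite → Measure.map (edgeAct g) μ = μ)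
    (𝕋 : MeasurableSpace ({e : Finset S // e.card = 2} → K))
    (h𝕋 : 𝕋 = ⨆ (s : S) (hs : s ∈ S₁),
      MeasurableSpace.comap (auxProj S₁ S₂ hdisj s hs) inferInstance)
    (n : ℕ) (e : Fin n → {e : Finset S // e.card = 2})
    (hinj : Function.Injective e) (he : ∀ i, (↑(e i).1 : Set S) ⊆ S₁)
    (f : Fin n → K → ℝ) (hf : ∀ i, Measurable (f i)) (hbd : ∀ i, ∃ C, ∀ x, |f i x| ≤ C) :
    μ[fun ω => ∏ i, f i (ω (e i)) | 𝕋]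
      =ᵐ[μ] fun ω => ∏ i, (μ[fun ω' => f i (ω' (e i)) | 𝕋]) ω := by
  classical
  letI : MeasurableSpace ({e : Finset S // e.card = 2} → K) := MeasurableSpace.pi
  have h𝕋0 : 𝕋 ≤ (MeasurableSpace.pi :
      MeasurableSpace ({e : Finset S // e.card = 2} → K)) := by
    rw [h𝕋]; apply iSup_le; intro s; apply iSup_le; intro hs
    exact measurable_iff_comap_le.mp (measurable_auxProj S₁ S₂ hdisj s hs)
  suffices H : ∀ (m : ℕ) (e : Fin m → {e : Finset S // e.card = 2}),
      Function.Injective e → (∀ i, (↑(e i).1 : Set S) ⊆ S₁) →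
      ∀ (f : Fin m → K → ℝ), (∀ i, Measurable (f i)) → (∀ i, ∃ C, ∀ x, |f i x| ≤ C) →
      (μ[fun ω => ∏ i, f i (ω (e i)) | 𝕋]
        =ᵐ[μ] fun ω => ∏ i, (μ[fun ω' => f i (ω' (e i)) | 𝕋]) ω) by
    exact H n e hinj he f hf hbd
  intro m
  induction m with
  | zero =>
    intro e _ _ f _ _
    have h1 : (fun ω : {e : Finset S // e.card = 2} → K
        => ∏ i : Fin 0, f i (ω (e i))) = fun _ => (1:ℝ) := by
      funext ω; simp
    rw [h1, condExp_const h𝕋0]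
    refine Filter.EventuallyEq.of_eq ?_
    funext ω; simp
  | succ m ih =>
    intro e hinj he f hf hbd
    -- bounds
    set B : Fin (m + 1) → ℝ := fun i => max (Classical.choose (hbd i)) 0 with hBdef
    have hB : ∀ i x, |f i x| ≤ B i :=
      fun i x => le_trans (Classical.choose_spec (hbd i) x) (le_max_left _ _)
    have hB0 : ∀ i, 0 ≤ B i := fun i => le_max_right _ _
    -- split the product
    set P : ({e : Finset S // e.card = 2} → K) → ℝ :=
      fun ω => ∏ i : Fin m, f i.castSucc (ω (e i.castSucc)) with hPdef
    set X : ({e : Finset S // e.card = 2} → K) → ℝ :=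
      fun ω => f (Fin.last m) (ω (e (Fin.last m))) with hXdef
    have hsplit : (fun ω : {e : Finset S // e.card = 2} → K
        => ∏ i : Fin (m + 1), f i (ω (e i))) = fun ω => P ω * X ω := by
      funext ω
      exact Fin.prod_univ_castSucc _
    set 𝒜 := 𝕋 ⊔ ⨆ i : Fin m, MeasurableSpace.comap
      (fun ω : {e : Finset S // e.card = 2} → K => ω (e i.castSucc)) inferInstance with h𝒜def
    letI : MeasurableSpace ({e : Finset S // e.card = 2} → K) := MeasurableSpace.pi
    have h𝒜0 : 𝒜 ≤ (MeasurableSpace.pi :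
        MeasurableSpace ({e : Finset S // e.card = 2} → K)) :=
      sup_le h𝕋0 (iSup_le fun i => measurable_iff_comap_le.mp (measurable_pi_apply _))
    have h𝕋𝒜 : 𝕋 ≤ 𝒜 := le_sup_left
    haveI : SigmaFinite (μ.trim h𝕋0) := inferInstance
    haveI : SigmaFinite (μ.trim h𝒜0) := inferInstance
    -- the key relative independence step
    have hne : ∀ i : Fin m, e i.castSucc ≠ e (Fin.last m) := by
      intro i h
      exact (Fin.castSucc_lt_last i).ne (hinj h)
    have hstep : μ[X|𝒜] =ᵐ[μ] μ[X|𝕋] :=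
      condexp_edge_indep S₁ S₂ hdisj hunion h₁ h₂ μ hμ 𝕋 h𝕋
        (e (Fin.last m)) (he _) (fun i => e i.castSucc) (fun i => he _) hne
        (hf _) (hB0 _) (hB _)
    -- measurability and integrability facts
    have hevA : ∀ i : Fin m, Measurable[𝒜]
        (fun ω : {e : Finset S // e.card = 2} → K => ω (e i.castSucc)) := by
      intro i
      apply measurable_iff_comap_le.mpr
      exact le_trans (le_iSup (fun i : Fin m => MeasurableSpace.comap
        (fun ω : {e : Finset S // e.card = 2} → K => ω (e i.castSucc)) inferInstance) i)
        le_sup_right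
    have hPmeasA : Measurable[𝒜] P := by
      rw [hPdef]
      apply Finset.measurable_prod
      intro i _
      exact (hf i.castSucc).comp (hevA i)
    have hPsm : StronglyMeasurable[𝒜] P := hPmeasA.stronglyMeasurable
    have hPmeas : Measurable[MeasurableSpace.pi] P := hPmeasA.mono h𝒜0 le_rfl
    have hXm : Measurable[MeasurableSpace.pi] X := (hf _).comp (measurable_pi_apply _)
    have hPbd : ∀ ω, |P ω| ≤ ∏ i : Fin m, B i.castSucc := by
      intro ω
      rw [hPdef]
      calc |∏ i : Fin m, f i.castSucc (ω (e i.castSucc))|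
          = ∏ i : Fin m, |f i.castSucc (ω (e i.castSucc))| := Finset.abs_prod _ _
        _ ≤ ∏ i : Fin m, B i.castSucc :=
            Finset.prod_le_prod (fun i _ => abs_nonneg _) (fun i _ => hB _ _)
    have hXbd : ∀ ω, |X ω| ≤ B (Fin.last m) := fun ω => hB _ _
    have hXint : Integrable X μ :=
      integrable_of_ae_bdd hXm.aestronglyMeasurable (Filter.Eventually.of_forall hXbd)
    have hPint : Integrable P μ :=
      integrable_of_ae_bdd hPmeas.aestronglyMeasurable (Filter.Eventually.of_forall hPbd)
    have hmulbd : ∀ (u v : ({e : Finset S // e.card = 2} → K) → ℝ) (Cu Cv : ℝ),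
        (∀ᵐ ω ∂μ, |u ω| ≤ Cu) → (∀ᵐ ω ∂μ, |v ω| ≤ Cv) → (0 ≤ Cv) →
        ∀ᵐ ω ∂μ, |u ω * v ω| ≤ Cu * Cv := by
      intro u v Cu Cv hu hv hCv
      filter_upwards [hu, hv] with ω h1 h2
      rw [abs_mul]
      exact mul_le_mul h1 h2 (abs_nonneg _) (le_trans (abs_nonneg _) h1)
    have hPXint : Integrable (fun ω => P ω * X ω) μ :=
      integrable_of_ae_bdd (hPmeas.aestronglyMeasurable.mul hXm.aestronglyMeasurable)
        (hmulbd _ _ _ _ (Filter.Eventually.of_forall hPbd)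
          (Filter.Eventually.of_forall hXbd) (hB0 _))
    have hcXbd : ∀ᵐ ω ∂μ, |(μ[X|𝒜]) ω| ≤ B (Fin.last m) :=
      ae_bdd_condexp_real (hB0 _) (Filter.Eventually.of_forall hXbd)
    have hcXbd' : ∀ᵐ ω ∂μ, |(μ[X|𝕋]) ω| ≤ B (Fin.last m) :=
      ae_bdd_condexp_real (hB0 _) (Filter.Eventually.of_forall hXbd)
    have hcXsmA : AEStronglyMeasurable (μ[X|𝒜]) μ :=
      (stronglyMeasurable_condExp.mono h𝒜0).aestronglyMeasurable
    have hcXsmT : AEStronglyMeasurable (μ[X|𝕋]) μ :=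
      (stronglyMeasurable_condExp.mono h𝕋0).aestronglyMeasurable
    have hTXPint : Integrable (fun ω => (μ[X|𝕋]) ω * P ω) μ :=
      integrable_of_ae_bdd (hcXsmT.mul hPmeas.aestronglyMeasurable)
        (hmulbd _ _ _ _ hcXbd' (Filter.Eventually.of_forall hPbd)
          (Finset.prod_nonneg fun i _ => hB0 _))
    -- the chain of a.e. equalities
    have step1 : μ[fun ω => P ω * X ω|𝕋] =ᵐ[μ] μ[μ[fun ω => P ω * X ω|𝒜]|𝕋] :=
      (condExp_condExp_of_le h𝕋𝒜 h𝒜0).symm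
    have step2 : μ[fun ω => P ω * X ω|𝒜] =ᵐ[μ] fun ω => P ω * (μ[X|𝒜]) ω :=
      condExp_mul_of_stronglyMeasurable_left hPsm hPXint hXint
    have step3 : (fun ω => P ω * (μ[X|𝒜]) ω) =ᵐ[μ] fun ω => (μ[X|𝕋]) ω * P ω := by
      filter_upwards [hstep] with ω hω
      rw [hω, mul_comm]
    have step4 : μ[fun ω => (μ[X|𝕋]) ω * P ω|𝕋]
        =ᵐ[μ] fun ω => (μ[X|𝕋]) ω * (μ[P|𝕋]) ω :=
      condExp_mul_of_stronglyMeasurable_left stronglyMeasurable_condExp hTXPint hPint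
    have hih : μ[P|𝕋] =ᵐ[μ] fun ω => ∏ i : Fin m,
        (μ[fun ω' => f i.castSucc (ω' (e i.castSucc))|𝕋]) ω := by
      refine ih (fun i => e i.castSucc) ?_ (fun i => he _) (fun i => f i.castSucc)
        (fun i => hf _) (fun i => hbd _)
      intro i j hij
      exact Fin.castSucc_injective m (hinj hij)
    rw [hsplit]
    calc μ[fun ω => P ω * X ω|𝕋]
        =ᵐ[μ] μ[μ[fun ω => P ω * X ω|𝒜]|𝕋] := step1
      _ =ᵐ[μ] μ[fun ω => (μ[X|𝕋]) ω * P ω|𝕋] := condExp_congr_ae (step2.trans step3)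
      _ =ᵐ[μ] fun ω => (μ[X|𝕋]) ω * (μ[P|𝕋]) ω := step4
      _ =ᵐ[μ] fun ω => ∏ i : Fin (m + 1), (μ[fun ω' => f i (ω' (e i))|𝕋]) ω := by
          filter_upwards [hih] with ω hω
          rw [hω, Fin.prod_univ_castSucc, mul_comm]
end

section
/- (Gowers–Cauchy–Schwarz in the bipartite case.) Let μ be a probability measure on K^{S₁×S₂} invariant under separate finitely-supported permutations of two countably infinite sets S₁ and S₂, and let f, g, h, ℓ ∈ L^∞(K). Choose distinct s, s' ∈ S₁ and distinct t, t' ∈ S₂. Then |∫ (f∘π_{(s,t)})(g∘π_{(s,t')})(h∘π_{(s',t)})(ℓ∘π_{(s',t')}) dμ| ≤ ‖f‖_{U}‖g‖_{U}‖h‖_{U}‖ℓ‖_{U}, where ‖f‖_U := (∫ ∏_{η∈{1,2}²} f∘π_{w_η} dμ)^{1/4} with w_{(1,1)}=(s,t), w_{(1,2)}=(s,t'), w_{(2,1)}=(s',t), w_{(2,2)}=(s',t'). -/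
open MeasureTheory Filter Topology

lemma bdd_integrable {Ω : Type*} [MeasurableSpace Ω] {μ : Measure Ω} [IsProbabilityMeasure μ]
    {f : Ω → ℝ} {C : ℝ} (hm : Measurable f) (hb : ∀ x, |f x| ≤ C) : Integrable f μ :=
  (integrable_const C).mono' hm.aestronglyMeasurable (ae_of_all _ fun x => by
    simpa [Real.norm_eq_abs] using hb x)

lemma integral_cs {Ω : Type*} [MeasurableSpace Ω] {μ : Measure Ω}
    {f g : Ω → ℝ}
    (hf2 : Integrable (fun x => f x * f x) μ) (hg2 : Integrable (fun x => g x * g x) μ)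
    (hfg : Integrable (fun x => f x * g x) μ) :
    (∫ x, f x * g x ∂μ)^2 ≤ (∫ x, f x * f x ∂μ) * (∫ x, g x * g x ∂μ) := by
  have key : ∀ u : ℝ, 0 ≤ (∫ x, g x * g x ∂μ) * (u*u) + (2 * ∫ x, f x * g x ∂μ) * u + ∫ x, f x * f x ∂μ := by
    intro u
    have h1 : (fun x => (u * g x + f x) * (u * g x + f x)) =
        (fun x => ((u*u) * (g x * g x) + (2*u) * (f x * g x)) + f x * f x) := by
      funext x; ring
    have hint : Integrable (fun x => (u*u) * (g x * g x) + (2*u) * (f x * g x)) μ :=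
      (hg2.const_mul _).add (hfg.const_mul _)
    have h2 : 0 ≤ ∫ x, (u * g x + f x) * (u * g x + f x) ∂μ :=
      integral_nonneg fun x => mul_self_nonneg _
    rw [h1, integral_add hint hf2, integral_add (hg2.const_mul _) (hfg.const_mul _),
      integral_const_mul, integral_const_mul] at h2
    nlinarith [h2]
  have hd := discrim_le_zero key
  rw [discrim] at hd
  nlinarith [hd]

lemma gcs_key {Ω : Type*} [MeasurableSpace Ω] (μ : Measure Ω) [IsProbabilityMeasure μ]
    (A B : ℕ → Ω → ℝ) (CA CB : ℝ)
    (hAm : ∀ i, Measurable (A i)) (hBm : ∀ i, Measurable (B i))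
    (hAb : ∀ i x, |A i x| ≤ CA) (hBb : ∀ i x, |B i x| ≤ CB)
    (J P Q : ℝ)
    (hAB : ∀ i j, ∫ x, A i x * B j x ∂μ = J)
    (hAA : ∀ i j, i ≠ j → ∫ x, A i x * A j x ∂μ = P)
    (hBB : ∀ i j, i ≠ j → ∫ x, B i x * B j x ∂μ = Q) :
    0 ≤ P ∧ 0 ≤ Q ∧ J ^ 2 ≤ P * Q := by
  classical
  have hne : Nonempty Ω := by
    by_contra hc
    rw [not_nonempty_iff] at hc
    have h1 : μ Set.univ = 1 := measure_univ
    rw [Set.univ_eq_empty_iff.mpr hc] at h1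
    simp at h1
  obtain ⟨x₀⟩ := hne
  have hCA : 0 ≤ CA := le_trans (abs_nonneg _) (hAb 0 x₀)
  have hCB : 0 ≤ CB := le_trans (abs_nonneg _) (hBb 0 x₀)
  -- integrability of products
  have hprod : ∀ (F G : ℕ → Ω → ℝ) (CF CG : ℝ), (∀ i, Measurable (F i)) → (∀ i, Measurable (G i)) →
      (∀ i x, |F i x| ≤ CF) → (∀ i x, |G i x| ≤ CG) → 0 ≤ CG →
      ∀ i j, Integrable (fun x => F i x * G j x) μ := by
    intro F G CF CG hFm hGm hFb hGb hCG i j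
    exact bdd_integrable ((hFm i).mul (hGm j)) (fun x => by
      rw [abs_mul]
      exact mul_le_mul (hFb i x) (hGb j x) (abs_nonneg _) (le_trans (abs_nonneg _) (hFb i x₀)))
  have intAA := hprod A A CA CA hAm hAm hAb hAb hCA
  have intBB := hprod B B CB CB hBm hBm hBb hBb hCB
  have intAB := hprod A B CA CB hAm hBm hAb hBb hCB
  -- diagonal bounds
  have hdiag : ∀ (F : ℕ → Ω → ℝ) (CF : ℝ), (∀ i x, |F i x| ≤ CF) →
      (∀ i j, Integrable (fun x => F i x * F j x) μ) →
      ∀ i, ∫ x, F i x * F i x ∂μ ≤ CF * CF := by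
    intro F CF hFb hint i
    calc ∫ x, F i x * F i x ∂μ ≤ ∫ _x, CF * CF ∂μ := by
          refine integral_mono (hint i i) (integrable_const _) (fun x => ?_)
          have h1 := abs_mul_abs_self (F i x)
          nlinarith [hFb i x, abs_nonneg (F i x)]
      _ = CF * CF := by simp
  -- expansion of product of sums
  have expand : ∀ (F G : ℕ → Ω → ℝ), (∀ i j, Integrable (fun x => F i x * G j x) μ) →
      ∀ n : ℕ, ∫ x, (∑ i ∈ Finset.range n, F i x) * (∑ j ∈ Finset.range n, G j x) ∂μ
        = ∑ i ∈ Finset.range n, ∑ j ∈ Finset.range n, ∫ x, F i x * G j x ∂μ := by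
    intro F G hint n
    have h1 : (fun x => (∑ i ∈ Finset.range n, F i x) * (∑ j ∈ Finset.range n, G j x))
        = fun x => ∑ i ∈ Finset.range n, ∑ j ∈ Finset.range n, F i x * G j x := by
      funext x; rw [Finset.sum_mul_sum]
    rw [h1, integral_finset_sum _ (fun i _ => integrable_finset_sum _ (fun j _ => hint i j))]
    exact Finset.sum_congr rfl fun i _ => integral_finset_sum _ fun j _ => hint i j
  have intS : ∀ (F G : ℕ → Ω → ℝ), (∀ i j, Integrable (fun x => F i x * G j x) μ) →
      ∀ n : ℕ, Integrable (fun x => (∑ i ∈ Finset.range n, F i x) * (∑ j ∈ Finset.range n, G j x)) μ := by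
    intro F G hint n
    have h1 : (fun x => (∑ i ∈ Finset.range n, F i x) * (∑ j ∈ Finset.range n, G j x))
        = fun x => ∑ i ∈ Finset.range n, ∑ j ∈ Finset.range n, F i x * G j x := by
      funext x; rw [Finset.sum_mul_sum]
    rw [h1]
    exact integrable_finset_sum _ fun i _ => integrable_finset_sum _ fun j _ => hint i j
  -- the double sum for a square, with off-diagonal value R
  have sumsq : ∀ (F : ℕ → Ω → ℝ) (R : ℝ), (∀ i j, i ≠ j → ∫ x, F i x * F j x ∂μ = R) →
      ∀ n : ℕ, ∑ i ∈ Finset.range n, ∑ j ∈ Finset.range n, ∫ x, F i x * F j x ∂μ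
        = (n:ℝ)^2 * R + ∑ i ∈ Finset.range n, ((∫ x, F i x * F i x ∂μ) - R) := by
    intro F R hR n
    have h1 : ∀ i ∈ Finset.range n, ∑ j ∈ Finset.range n, ∫ x, F i x * F j x ∂μ
        = (n:ℝ) * R + ((∫ x, F i x * F i x ∂μ) - R) := by
      intro i hi
      have h2 : ∀ j ∈ Finset.range n, ∫ x, F i x * F j x ∂μ
          = R + (if j = i then ((∫ x, F i x * F i x ∂μ) - R) else 0) := by
        intro j _
        by_cases hij : j = i
        · subst hij; simp
        · simp [hij, hR i j (Ne.symm hij)]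
      rw [Finset.sum_congr rfl h2, Finset.sum_add_distrib, Finset.sum_const,
        Finset.sum_ite_eq' (Finset.range n) i, if_pos hi, Finset.card_range]
      push_cast; ring
    rw [Finset.sum_congr rfl h1, Finset.sum_add_distrib, Finset.sum_const, Finset.card_range]
    push_cast; ring
  -- nonnegativity of squares of sums, and bounds
  have sqnn : ∀ (F : ℕ → Ω → ℝ) (R : ℝ) (CF : ℝ), 0 ≤ CF → (∀ i x, |F i x| ≤ CF) →
      (∀ i j, Integrable (fun x => F i x * F j x) μ) →
      (∀ i j, i ≠ j → ∫ x, F i x * F j x ∂μ = R) →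
      ∀ n : ℕ, 0 ≤ (n:ℝ)^2 * R + (n:ℝ) * (CF*CF) - (n:ℝ) * R := by
    intro F R CF hCF hFb hint hR n
    have h0 : 0 ≤ ∫ x, (∑ i ∈ Finset.range n, F i x) * (∑ j ∈ Finset.range n, F j x) ∂μ :=
      integral_nonneg fun x => mul_self_nonneg _
    rw [expand F F hint n, sumsq F R hR n] at h0
    have h1 : ∑ i ∈ Finset.range n, ((∫ x, F i x * F i x ∂μ) - R)
        ≤ ∑ _i ∈ Finset.range n, (CF*CF - R) :=
      Finset.sum_le_sum fun i _ => by
        have := hdiag F CF hFb hint i; linarith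
    rw [Finset.sum_const, Finset.card_range] at h1
    simp only [nsmul_eq_mul] at h1
    linarith [h0, h1]
  -- prove 0 ≤ P
  have hnonneg : ∀ (R CF : ℝ), (∀ n : ℕ, 0 ≤ (n:ℝ)^2 * R + (n:ℝ) * (CF*CF) - (n:ℝ) * R) →
      0 ≤ R := by
    intro R CF hn
    by_contra hR
    push_neg at hR
    obtain ⟨m, hm⟩ := exists_nat_gt (CF*CF / (-R))
    have hRpos : (0:ℝ) < -R := by linarith
    have hm' : CF*CF < (m:ℝ) * (-R) := (div_lt_iff₀ hRpos).mp hm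
    have h := hn (m+1)
    push_cast at h
    nlinarith [h, hm']
  have hP : 0 ≤ P := hnonneg P CA (sqnn A P CA hCA hAb intAA hAA)
  have hQ : 0 ≤ Q := hnonneg Q CB (sqnn B Q CB hCB hBb intBB hBB)
  refine ⟨hP, hQ, ?_⟩
  -- the per-n inequality
  have hIn : ∀ n : ℕ, 1 ≤ n → J ^ 2 ≤ (P + CA*CA/(n:ℝ)) * (Q + CB*CB/(n:ℝ)) := by
    intro n hn
    have hn0 : (0:ℝ) < n := by exact_mod_cast hn
    have cs := integral_cs (μ := μ)
      (f := fun x => ∑ i ∈ Finset.range n, A i x) (g := fun x => ∑ j ∈ Finset.range n, B j x)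
      (intS A A intAA n) (intS B B intBB n) (intS A B intAB n)
    have e1 : ∫ x, (∑ i ∈ Finset.range n, A i x) * (∑ j ∈ Finset.range n, B j x) ∂μ
        = (n:ℝ)^2 * J := by
      rw [expand A B intAB n]
      rw [Finset.sum_congr rfl (fun i _ => Finset.sum_congr rfl (fun j _ => hAB i j))]
      simp [Finset.sum_const, Finset.card_range]
      ring
    have eA : ∫ x, (∑ i ∈ Finset.range n, A i x) * (∑ j ∈ Finset.range n, A j x) ∂μ
        ≤ (n:ℝ)^2 * P + (n:ℝ) * (CA*CA) := by
      rw [expand A A intAA n, sumsq A P hAA n]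
      have h1 : ∑ i ∈ Finset.range n, ((∫ x, A i x * A i x ∂μ) - P)
          ≤ ∑ _i ∈ Finset.range n, (CA*CA - P) :=
        Finset.sum_le_sum fun i _ => by
          have := hdiag A CA hAb intAA i; linarith
      rw [Finset.sum_const, Finset.card_range] at h1
      simp only [nsmul_eq_mul] at h1
      nlinarith [h1, hP, hn0]
    have eB : ∫ x, (∑ i ∈ Finset.range n, B i x) * (∑ j ∈ Finset.range n, B j x) ∂μ
        ≤ (n:ℝ)^2 * Q + (n:ℝ) * (CB*CB) := by
      rw [expand B B intBB n, sumsq B Q hBB n]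
      have h1 : ∑ i ∈ Finset.range n, ((∫ x, B i x * B i x ∂μ) - Q)
          ≤ ∑ _i ∈ Finset.range n, (CB*CB - Q) :=
        Finset.sum_le_sum fun i _ => by
          have := hdiag B CB hBb intBB i; linarith
      rw [Finset.sum_const, Finset.card_range] at h1
      simp only [nsmul_eq_mul] at h1
      nlinarith [h1, hQ, hn0]
    have nA : 0 ≤ ∫ x, (∑ i ∈ Finset.range n, A i x) * (∑ j ∈ Finset.range n, A j x) ∂μ :=
      integral_nonneg fun x => mul_self_nonneg _
    have nB : 0 ≤ ∫ x, (∑ i ∈ Finset.range n, B i x) * (∑ j ∈ Finset.range n, B j x) ∂μ :=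
      integral_nonneg fun x => mul_self_nonneg _
    rw [e1] at cs
    have h2 : ((n:ℝ)^2 * J)^2 ≤ ((n:ℝ)^2 * P + (n:ℝ) * (CA*CA)) * ((n:ℝ)^2 * Q + (n:ℝ) * (CB*CB)) :=
      le_trans cs (mul_le_mul eA eB nB (by nlinarith [hP, hCA, hn0]))
    have h3 : ((n:ℝ)^2 * P + (n:ℝ) * (CA*CA)) * ((n:ℝ)^2 * Q + (n:ℝ) * (CB*CB))
        = (n:ℝ)^4 * ((P + CA*CA/(n:ℝ)) * (Q + CB*CB/(n:ℝ))) := by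
      field_simp
    rw [h3] at h2
    have h4 : ((n:ℝ)^2 * J)^2 = (n:ℝ)^4 * J ^ 2 := by ring
    rw [h4] at h2
    exact le_of_mul_le_mul_left h2 (by positivity)
  -- take the limit
  have hlim : Tendsto (fun n : ℕ => (P + CA*CA/(n:ℝ)) * (Q + CB*CB/(n:ℝ))) atTop (𝓝 ((P+0)*(Q+0))) :=
    ((tendsto_const_nhds.add (tendsto_const_div_atTop_nhds_zero_nat _)).mul
      (tendsto_const_nhds.add (tendsto_const_div_atTop_nhds_zero_nat _)))
  have := ge_of_tendsto hlim (Filter.eventually_atTop.2 ⟨1, fun n hn => hIn n hn⟩)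
  simpa using this

lemma exists_finsupp_perm_s16 {α : Type*} (s s' a b : α) (hss : s ≠ s') (hab : a ≠ b) :
    ∃ g : Equiv.Perm α, {x | g x ≠ x}.Finite ∧ g s = a ∧ g s' = b := by
  classical
  refine ⟨(Equiv.swap s a).trans (Equiv.swap ((Equiv.swap s a) s') b), ?_, ?_, ?_⟩
  · apply Set.Finite.subset
      (((Set.finite_singleton b).insert ((Equiv.swap s a) s')).insert a |>.insert s)
    intro x hx
    by_contra hxmem
    simp only [Set.mem_insert_iff, Set.mem_singleton_iff, not_or] at hxmem
    obtain ⟨h1, h2, h3, h4⟩ := hxmem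
    apply hx
    simp only [Set.mem_setOf_eq, Equiv.trans_apply, not_not]
    rw [Equiv.swap_apply_of_ne_of_ne h1 h2, Equiv.swap_apply_of_ne_of_ne h3 h4]
  · simp only [Equiv.trans_apply]
    rw [Equiv.swap_apply_left]
    apply Equiv.swap_apply_of_ne_of_ne
    · intro hEq
      apply hss
      have h5 := congrArg (Equiv.swap s a) hEq
      rwa [Equiv.swap_apply_right, Equiv.swap_apply_self] at h5
    · exact hab
  · simp only [Equiv.trans_apply]
    exact Equiv.swap_apply_left _ _

lemma integral_invariant {Ω : Type*} [MeasurableSpace Ω] {μ : Measure Ω}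
    {T : Ω → Ω} (hT : Measurable T) (hinv : Measure.map T μ = μ)
    {Φ : Ω → ℝ} (hΦ : Measurable Φ) :
    ∫ x, Φ x ∂μ = ∫ x, Φ (T x) ∂μ := by
  conv_lhs => rw [← hinv]
  exact integral_map hT.aemeasurable hΦ.aestronglyMeasurable


/-- Gowers–Cauchy–Schwarz, bipartite case: for a separately exchangeable law `μ`
on `K^{S₁×S₂}` and bounded measurable `f, g, h, ℓ : K → ℝ`, with distinct `s ≠ s'` in `S₁` and
`t ≠ t'` in `S₂`,
`|∫ f(ω(s,t)) g(ω(s,t')) h(ω(s',t)) ℓ(ω(s',t')) dμ| ≤ ‖f‖_U ‖g‖_U ‖h‖_U ‖ℓ‖_U`,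
where `‖f‖_U` is the fourth root of the corresponding Gowers box integral of `f`. -/
theorem gowers_cauchy_schwarz_bipartite
    {S₁ S₂ : Type*} [Countable S₁] [Infinite S₁] [Countable S₂] [Infinite S₂]
    {K : Type*} [MeasurableSpace K]
    (μ : Measure (S₁ × S₂ → K)) [IsProbabilityMeasure μ]
    (hμ₁ : ∀ g₁ : Equiv.Perm S₁, {x | g₁ x ≠ x}.Finite →
      Measure.map (fun (ω : S₁ × S₂ → K) (p : S₁ × S₂) => ω (g₁ p.1, p.2)) μ = μ)
    (hμ₂ : ∀ g₂ : Equiv.Perm S₂, {x | g₂ x ≠ x}.Finite →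
      Measure.map (fun (ω : S₁ × S₂ → K) (p : S₁ × S₂) => ω (p.1, g₂ p.2)) μ = μ)
    (f g h ℓ : K → ℝ)
    (hfm : Measurable f) (hgm : Measurable g) (hhm : Measurable h) (hℓm : Measurable ℓ)
    (hfb : ∃ C, ∀ x, |f x| ≤ C) (hgb : ∃ C, ∀ x, |g x| ≤ C)
    (hhb : ∃ C, ∀ x, |h x| ≤ C) (hℓb : ∃ C, ∀ x, |ℓ x| ≤ C)
    (s s' : S₁) (hss : s ≠ s') (t t' : S₂) (htt : t ≠ t') :
    |∫ ω, f (ω (s, t)) * g (ω (s, t')) * h (ω (s', t)) * ℓ (ω (s', t')) ∂μ|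
      ≤ (∫ ω, f (ω (s, t)) * f (ω (s, t')) * f (ω (s', t)) * f (ω (s', t')) ∂μ) ^ ((1:ℝ)/4)
        * (∫ ω, g (ω (s, t)) * g (ω (s, t')) * g (ω (s', t)) * g (ω (s', t')) ∂μ) ^ ((1:ℝ)/4)
        * (∫ ω, h (ω (s, t)) * h (ω (s, t')) * h (ω (s', t)) * h (ω (s', t')) ∂μ) ^ ((1:ℝ)/4)
        * (∫ ω, ℓ (ω (s, t)) * ℓ (ω (s, t')) * ℓ (ω (s', t)) * ℓ (ω (s', t')) ∂μ) ^ ((1:ℝ)/4) := by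
  classical
  obtain ⟨C₁, hfb⟩ := hfb
  obtain ⟨C₂, hgb⟩ := hgb
  obtain ⟨C₃, hhb⟩ := hhb
  obtain ⟨C₄, hℓb⟩ := hℓb
  set Cf := max C₁ 0 with hCfdef
  set Cg := max C₂ 0 with hCgdef
  set Ch := max C₃ 0 with hChdef
  set Cl := max C₄ 0 with hCldef
  have hfb' : ∀ x, |f x| ≤ Cf := fun x => (hfb x).trans (le_max_left _ _)
  have hgb' : ∀ x, |g x| ≤ Cg := fun x => (hgb x).trans (le_max_left _ _)
  have hhb' : ∀ x, |h x| ≤ Ch := fun x => (hhb x).trans (le_max_left _ _)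
  have hℓb' : ∀ x, |ℓ x| ≤ Cl := fun x => (hℓb x).trans (le_max_left _ _)
  have hCf : 0 ≤ Cf := le_max_right _ _
  have hCg : 0 ≤ Cg := le_max_right _ _
  have hCh : 0 ≤ Ch := le_max_right _ _
  have hCl : 0 ≤ Cl := le_max_right _ _
  have meas4 : ∀ (f₁ f₂ f₃ f₄ : K → ℝ), Measurable f₁ → Measurable f₂ → Measurable f₃ →
      Measurable f₄ → ∀ (p₁ p₂ p₃ p₄ : S₁ × S₂),
      Measurable fun ω : S₁ × S₂ → K =>
        f₁ (ω p₁) * f₂ (ω p₂) * f₃ (ω p₃) * f₄ (ω p₄) := by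
    intro f₁ f₂ f₃ f₄ h₁ h₂ h₃ h₄ p₁ p₂ p₃ p₄
    exact (((h₁.comp (measurable_pi_apply _)).mul (h₂.comp (measurable_pi_apply _))).mul
      (h₃.comp (measurable_pi_apply _))).mul (h₄.comp (measurable_pi_apply _))
  have rowEq : ∀ (a b : S₁), a ≠ b → ∀ (f₁ f₂ f₃ f₄ : K → ℝ), Measurable f₁ → Measurable f₂ →
      Measurable f₃ → Measurable f₄ →
      ∫ ω, f₁ (ω (s, t)) * f₂ (ω (s, t')) * f₃ (ω (s', t)) * f₄ (ω (s', t')) ∂μ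
        = ∫ ω, f₁ (ω (a, t)) * f₂ (ω (a, t')) * f₃ (ω (b, t)) * f₄ (ω (b, t')) ∂μ := by
    intro a b hab f₁ f₂ f₃ f₄ h₁ h₂ h₃ h₄
    obtain ⟨gp, hfin, hga, hgb'⟩ := exists_finsupp_perm_s16 s s' a b hss hab
    have hT : Measurable fun (ω : S₁ × S₂ → K) (p : S₁ × S₂) => ω (gp p.1, p.2) :=
      measurable_pi_lambda _ fun p => measurable_pi_apply _
    have hstep := integral_invariant hT (hμ₁ gp hfin)
      (Φ := fun ω : S₁ × S₂ → K => f₁ (ω (s, t)) * f₂ (ω (s, t')) * f₃ (ω (s', t)) * f₄ (ω (s', t')))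
      (meas4 f₁ f₂ f₃ f₄ h₁ h₂ h₃ h₄ _ _ _ _)
    rw [hstep]
    simp only [hga, hgb']
  have colEq : ∀ (a b : S₂), a ≠ b → ∀ (f₁ f₂ f₃ f₄ : K → ℝ), Measurable f₁ → Measurable f₂ →
      Measurable f₃ → Measurable f₄ →
      ∫ ω, f₁ (ω (s, t)) * f₂ (ω (s', t)) * f₃ (ω (s, t')) * f₄ (ω (s', t')) ∂μ
        = ∫ ω, f₁ (ω (s, a)) * f₂ (ω (s', a)) * f₃ (ω (s, b)) * f₄ (ω (s', b)) ∂μ := by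
    intro a b hab f₁ f₂ f₃ f₄ h₁ h₂ h₃ h₄
    obtain ⟨gq, hfin, hga, hgb'⟩ := exists_finsupp_perm_s16 t t' a b htt hab
    have hT : Measurable fun (ω : S₁ × S₂ → K) (p : S₁ × S₂) => ω (p.1, gq p.2) :=
      measurable_pi_lambda _ fun p => measurable_pi_apply _
    have hstep := integral_invariant hT (hμ₂ gq hfin)
      (Φ := fun ω : S₁ × S₂ → K => f₁ (ω (s, t)) * f₂ (ω (s', t)) * f₃ (ω (s, t')) * f₄ (ω (s', t')))
      (meas4 f₁ f₂ f₃ f₄ h₁ h₂ h₃ h₄ _ _ _ _)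
    rw [hstep]
    simp only [hga, hgb']
  set J := ∫ ω, f (ω (s, t)) * g (ω (s, t')) * h (ω (s', t)) * ℓ (ω (s', t')) ∂μ with hJdef
  set P := ∫ ω, f (ω (s, t)) * g (ω (s, t')) * f (ω (s', t)) * g (ω (s', t')) ∂μ with hPdef
  set Q := ∫ ω, h (ω (s, t)) * ℓ (ω (s, t')) * h (ω (s', t)) * ℓ (ω (s', t')) ∂μ with hQdef
  set F := ∫ ω, f (ω (s, t)) * f (ω (s, t')) * f (ω (s', t)) * f (ω (s', t')) ∂μ with hFdef
  set G := ∫ ω, g (ω (s, t)) * g (ω (s, t')) * g (ω (s', t)) * g (ω (s', t')) ∂μ with hGdef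
  set H := ∫ ω, h (ω (s, t)) * h (ω (s, t')) * h (ω (s', t)) * h (ω (s', t')) ∂μ with hHdef
  set L := ∫ ω, ℓ (ω (s, t)) * ℓ (ω (s, t')) * ℓ (ω (s', t)) * ℓ (ω (s', t')) ∂μ with hLdef
  let r : ℕ ↪ S₁ := Infinite.natEmbedding S₁
  let c : ℕ ↪ S₂ := Infinite.natEmbedding S₂
  -- Stage 1: J² ≤ P * Q
  have stage1 := gcs_key μ
    (fun i ω => f (ω (r (2*i), t)) * g (ω (r (2*i), t')))
    (fun j ω => h (ω (r (2*j+1), t)) * ℓ (ω (r (2*j+1), t')))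
    (Cf*Cg) (Ch*Cl)
    (fun i => (hfm.comp (measurable_pi_apply _)).mul (hgm.comp (measurable_pi_apply _)))
    (fun j => (hhm.comp (measurable_pi_apply _)).mul (hℓm.comp (measurable_pi_apply _)))
    (fun i x => by rw [abs_mul]; exact mul_le_mul (hfb' _) (hgb' _) (abs_nonneg _) hCf)
    (fun j x => by rw [abs_mul]; exact mul_le_mul (hhb' _) (hℓb' _) (abs_nonneg _) hCh)
    J P Q
    (fun i j => by
      have hne : r (2*i) ≠ r (2*j+1) := fun hEq => by
        have := r.injective hEq; omega
      show (∫ x, (f (x (r (2*i), t)) * g (x (r (2*i), t')))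
          * (h (x (r (2*j+1), t)) * ℓ (x (r (2*j+1), t'))) ∂μ) = J
      rw [show (fun x : S₁ × S₂ → K => (f (x (r (2*i), t)) * g (x (r (2*i), t')))
            * (h (x (r (2*j+1), t)) * ℓ (x (r (2*j+1), t'))))
          = fun ω => f (ω (r (2*i), t)) * g (ω (r (2*i), t')) * h (ω (r (2*j+1), t))
            * ℓ (ω (r (2*j+1), t')) from funext fun ω => by ring, hJdef]
      exact (rowEq _ _ hne f g h ℓ hfm hgm hhm hℓm).symm)
    (fun i j hij => by
      have hne : r (2*i) ≠ r (2*j) := fun hEq => by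
        have := r.injective hEq; omega
      show (∫ x, (f (x (r (2*i), t)) * g (x (r (2*i), t')))
          * (f (x (r (2*j), t)) * g (x (r (2*j), t'))) ∂μ) = P
      rw [show (fun x : S₁ × S₂ → K => (f (x (r (2*i), t)) * g (x (r (2*i), t')))
            * (f (x (r (2*j), t)) * g (x (r (2*j), t'))))
          = fun ω => f (ω (r (2*i), t)) * g (ω (r (2*i), t')) * f (ω (r (2*j), t))
            * g (ω (r (2*j), t')) from funext fun ω => by ring, hPdef]
      exact (rowEq _ _ hne f g f g hfm hgm hfm hgm).symm)
    (fun i j hij => by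
      have hne : r (2*i+1) ≠ r (2*j+1) := fun hEq => by
        have := r.injective hEq; omega
      show (∫ x, (h (x (r (2*i+1), t)) * ℓ (x (r (2*i+1), t')))
          * (h (x (r (2*j+1), t)) * ℓ (x (r (2*j+1), t'))) ∂μ) = Q
      rw [show (fun x : S₁ × S₂ → K => (h (x (r (2*i+1), t)) * ℓ (x (r (2*i+1), t')))
            * (h (x (r (2*j+1), t)) * ℓ (x (r (2*j+1), t'))))
          = fun ω => h (ω (r (2*i+1), t)) * ℓ (ω (r (2*i+1), t')) * h (ω (r (2*j+1), t))
            * ℓ (ω (r (2*j+1), t')) from funext fun ω => by ring, hQdef]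
      exact (rowEq _ _ hne h ℓ h ℓ hhm hℓm hhm hℓm).symm)
  -- Stage 2a: P² ≤ F * G
  have stage2P := gcs_key μ
    (fun i ω => f (ω (s, c (2*i))) * f (ω (s', c (2*i))))
    (fun j ω => g (ω (s, c (2*j+1))) * g (ω (s', c (2*j+1))))
    (Cf*Cf) (Cg*Cg)
    (fun i => (hfm.comp (measurable_pi_apply _)).mul (hfm.comp (measurable_pi_apply _)))
    (fun j => (hgm.comp (measurable_pi_apply _)).mul (hgm.comp (measurable_pi_apply _)))
    (fun i x => by rw [abs_mul]; exact mul_le_mul (hfb' _) (hfb' _) (abs_nonneg _) hCf)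
    (fun j x => by rw [abs_mul]; exact mul_le_mul (hgb' _) (hgb' _) (abs_nonneg _) hCg)
    P F G
    (fun i j => by
      have hne : c (2*i) ≠ c (2*j+1) := fun hEq => by
        have := c.injective hEq; omega
      show (∫ x, (f (x (s, c (2*i))) * f (x (s', c (2*i))))
          * (g (x (s, c (2*j+1))) * g (x (s', c (2*j+1)))) ∂μ) = P
      rw [show (fun x : S₁ × S₂ → K => (f (x (s, c (2*i))) * f (x (s', c (2*i))))
            * (g (x (s, c (2*j+1))) * g (x (s', c (2*j+1)))))
          = fun ω => f (ω (s, c (2*i))) * f (ω (s', c (2*i))) * g (ω (s, c (2*j+1)))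
            * g (ω (s', c (2*j+1))) from funext fun ω => by ring]
      rw [← colEq _ _ hne f f g g hfm hfm hgm hgm, hPdef]
      rw [show (fun ω : S₁ × S₂ → K => f (ω (s, t)) * g (ω (s, t')) * f (ω (s', t)) * g (ω (s', t')))
          = fun ω => f (ω (s, t)) * f (ω (s', t)) * g (ω (s, t')) * g (ω (s', t'))
          from funext fun ω => by ring])
    (fun i j hij => by
      have hne : c (2*i) ≠ c (2*j) := fun hEq => by
        have := c.injective hEq; omega
      show (∫ x, (f (x (s, c (2*i))) * f (x (s', c (2*i))))
          * (f (x (s, c (2*j))) * f (x (s', c (2*j)))) ∂μ) = F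
      rw [show (fun x : S₁ × S₂ → K => (f (x (s, c (2*i))) * f (x (s', c (2*i))))
            * (f (x (s, c (2*j))) * f (x (s', c (2*j)))))
          = fun ω => f (ω (s, c (2*i))) * f (ω (s', c (2*i))) * f (ω (s, c (2*j)))
            * f (ω (s', c (2*j))) from funext fun ω => by ring]
      rw [← colEq _ _ hne f f f f hfm hfm hfm hfm, hFdef]
      rw [show (fun ω : S₁ × S₂ → K => f (ω (s, t)) * f (ω (s, t')) * f (ω (s', t)) * f (ω (s', t')))
          = fun ω => f (ω (s, t)) * f (ω (s', t)) * f (ω (s, t')) * f (ω (s', t'))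
          from funext fun ω => by ring])
    (fun i j hij => by
      have hne : c (2*i+1) ≠ c (2*j+1) := fun hEq => by
        have := c.injective hEq; omega
      show (∫ x, (g (x (s, c (2*i+1))) * g (x (s', c (2*i+1))))
          * (g (x (s, c (2*j+1))) * g (x (s', c (2*j+1)))) ∂μ) = G
      rw [show (fun x : S₁ × S₂ → K => (g (x (s, c (2*i+1))) * g (x (s', c (2*i+1))))
            * (g (x (s, c (2*j+1))) * g (x (s', c (2*j+1)))))
          = fun ω => g (ω (s, c (2*i+1))) * g (ω (s', c (2*i+1))) * g (ω (s, c (2*j+1)))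
            * g (ω (s', c (2*j+1))) from funext fun ω => by ring]
      rw [← colEq _ _ hne g g g g hgm hgm hgm hgm, hGdef]
      rw [show (fun ω : S₁ × S₂ → K => g (ω (s, t)) * g (ω (s, t')) * g (ω (s', t)) * g (ω (s', t')))
          = fun ω => g (ω (s, t)) * g (ω (s', t)) * g (ω (s, t')) * g (ω (s', t'))
          from funext fun ω => by ring])
  -- Stage 2b: Q² ≤ H * L
  have stage2Q := gcs_key μ
    (fun i ω => h (ω (s, c (2*i))) * h (ω (s', c (2*i))))
    (fun j ω => ℓ (ω (s, c (2*j+1))) * ℓ (ω (s', c (2*j+1))))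
    (Ch*Ch) (Cl*Cl)
    (fun i => (hhm.comp (measurable_pi_apply _)).mul (hhm.comp (measurable_pi_apply _)))
    (fun j => (hℓm.comp (measurable_pi_apply _)).mul (hℓm.comp (measurable_pi_apply _)))
    (fun i x => by rw [abs_mul]; exact mul_le_mul (hhb' _) (hhb' _) (abs_nonneg _) hCh)
    (fun j x => by rw [abs_mul]; exact mul_le_mul (hℓb' _) (hℓb' _) (abs_nonneg _) hCl)
    Q H L
    (fun i j => by
      have hne : c (2*i) ≠ c (2*j+1) := fun hEq => by
        have := c.injective hEq; omega
      show (∫ x, (h (x (s, c (2*i))) * h (x (s', c (2*i))))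
          * (ℓ (x (s, c (2*j+1))) * ℓ (x (s', c (2*j+1)))) ∂μ) = Q
      rw [show (fun x : S₁ × S₂ → K => (h (x (s, c (2*i))) * h (x (s', c (2*i))))
            * (ℓ (x (s, c (2*j+1))) * ℓ (x (s', c (2*j+1)))))
          = fun ω => h (ω (s, c (2*i))) * h (ω (s', c (2*i))) * ℓ (ω (s, c (2*j+1)))
            * ℓ (ω (s', c (2*j+1))) from funext fun ω => by ring]
      rw [← colEq _ _ hne h h ℓ ℓ hhm hhm hℓm hℓm, hQdef]
      rw [show (fun ω : S₁ × S₂ → K => h (ω (s, t)) * ℓ (ω (s, t')) * h (ω (s', t)) * ℓ (ω (s', t')))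
          = fun ω => h (ω (s, t)) * h (ω (s', t)) * ℓ (ω (s, t')) * ℓ (ω (s', t'))
          from funext fun ω => by ring])
    (fun i j hij => by
      have hne : c (2*i) ≠ c (2*j) := fun hEq => by
        have := c.injective hEq; omega
      show (∫ x, (h (x (s, c (2*i))) * h (x (s', c (2*i))))
          * (h (x (s, c (2*j))) * h (x (s', c (2*j)))) ∂μ) = H
      rw [show (fun x : S₁ × S₂ → K => (h (x (s, c (2*i))) * h (x (s', c (2*i))))
            * (h (x (s, c (2*j))) * h (x (s', c (2*j)))))
          = fun ω => h (ω (s, c (2*i))) * h (ω (s', c (2*i))) * h (ω (s, c (2*j)))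
            * h (ω (s', c (2*j))) from funext fun ω => by ring]
      rw [← colEq _ _ hne h h h h hhm hhm hhm hhm, hHdef]
      rw [show (fun ω : S₁ × S₂ → K => h (ω (s, t)) * h (ω (s, t')) * h (ω (s', t)) * h (ω (s', t')))
          = fun ω => h (ω (s, t)) * h (ω (s', t)) * h (ω (s, t')) * h (ω (s', t'))
          from funext fun ω => by ring])
    (fun i j hij => by
      have hne : c (2*i+1) ≠ c (2*j+1) := fun hEq => by
        have := c.injective hEq; omega
      show (∫ x, (ℓ (x (s, c (2*i+1))) * ℓ (x (s', c (2*i+1))))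
          * (ℓ (x (s, c (2*j+1))) * ℓ (x (s', c (2*j+1)))) ∂μ) = L
      rw [show (fun x : S₁ × S₂ → K => (ℓ (x (s, c (2*i+1))) * ℓ (x (s', c (2*i+1))))
            * (ℓ (x (s, c (2*j+1))) * ℓ (x (s', c (2*j+1)))))
          = fun ω => ℓ (ω (s, c (2*i+1))) * ℓ (ω (s', c (2*i+1))) * ℓ (ω (s, c (2*j+1)))
            * ℓ (ω (s', c (2*j+1))) from funext fun ω => by ring]
      rw [← colEq _ _ hne ℓ ℓ ℓ ℓ hℓm hℓm hℓm hℓm, hLdef]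
      rw [show (fun ω : S₁ × S₂ → K => ℓ (ω (s, t)) * ℓ (ω (s, t')) * ℓ (ω (s', t)) * ℓ (ω (s', t')))
          = fun ω => ℓ (ω (s, t)) * ℓ (ω (s', t)) * ℓ (ω (s, t')) * ℓ (ω (s', t'))
          from funext fun ω => by ring])
  obtain ⟨hP0, hQ0, hJ2⟩ := stage1
  obtain ⟨hF0, hG0, hP2⟩ := stage2P
  obtain ⟨hH0, hL0, hQ2⟩ := stage2Q
  have h4 : |J| ^ (4:ℕ) ≤ F * G * H * L := by
    have e1 : |J| ^ (4:ℕ) = (J ^ 2) ^ 2 := by rw [← sq_abs J]; ring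
    calc |J| ^ (4:ℕ) = (J ^ 2) ^ 2 := e1
      _ ≤ (P * Q) ^ 2 := pow_le_pow_left₀ (sq_nonneg J) hJ2 2
      _ = P ^ 2 * Q ^ 2 := mul_pow _ _ 2
      _ ≤ (F * G) * (H * L) := mul_le_mul hP2 hQ2 (sq_nonneg Q) (mul_nonneg hF0 hG0)
      _ = F * G * H * L := by ring
  have habs : (0:ℝ) ≤ |J| := abs_nonneg _
  have key : (|J| ^ (4:ℕ) : ℝ) ^ ((1:ℝ)/4) ≤ (F * G * H * L) ^ ((1:ℝ)/4) :=
    Real.rpow_le_rpow (by positivity) h4 (by norm_num)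
  have e2 : (|J| ^ (4:ℕ) : ℝ) ^ ((1:ℝ)/4) = |J| := by
    rw [← Real.rpow_natCast |J| 4, ← Real.rpow_mul habs]
    norm_num
  rw [e2] at key
  calc |J| ≤ (F * G * H * L) ^ ((1:ℝ)/4) := key
    _ = F ^ ((1:ℝ)/4) * G ^ ((1:ℝ)/4) * H ^ ((1:ℝ)/4) * L ^ ((1:ℝ)/4) := by
      rw [Real.mul_rpow (mul_nonneg (mul_nonneg hF0 hG0) hH0) hL0,
        Real.mul_rpow (mul_nonneg hF0 hG0) hH0, Real.mul_rpow hF0 hG0]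
end
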